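/- arXiv:math/0612467 — 10 statements merged into one kernel-verified Lean document; each statement's English description precedes it below -/
import Mathlib

section
/- Let ψ be a forward flow on ℝⁿ which is continuous as a map of (t,x) and satisfies ψ t 0 = 0 for all t ≥ 0. Suppose that for every ρ > 0 there exist t₀ ≥ 0 and functions a, b such that: a is continuous and monotone increasing on [0,ρ] with a(0) = 0; b is continuous and monotone decreasing on [t₀,∞) with b(t) → 0 as t → ∞; and ‖ψ t x‖ ≤ a(‖x‖)·b(t) for all x with ‖x‖ ≤ ρ and all t ≥ t₀. Then the origin 0 is globally asymptotically stable for ψ. -/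
open Set Filter Metric

/-- b is nonnegative on [t₀,∞) when antitone and tending to 0. -/
lemma bnonneg_aux {b : ℝ → ℝ} {t₀ : ℝ} (hanti : AntitoneOn b (Set.Ici t₀))
    (hlim : Filter.Tendsto b Filter.atTop (nhds 0)) :
    ∀ t ≥ t₀, 0 ≤ b t := by
  intro t ht
  refine le_of_tendsto hlim ?_
  filter_upwards [Filter.eventually_ge_atTop t] with s hs
  exact hanti (Set.mem_Ici.2 ht) (Set.mem_Ici.2 (le_trans ht hs)) hs

/-- A Hahn-type criterion for global asymptotic stability of the
origin for a forward flow `ψ` on ℝⁿ. -/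
theorem stmt_0 (n : ℕ) (hn : 1 ≤ n)
    (ψ : ℝ → EuclideanSpace ℝ (Fin n) → EuclideanSpace ℝ (Fin n))
    (hcont : Continuous (fun p : ℝ × EuclideanSpace ℝ (Fin n) => ψ p.1 p.2))
    (hψ0 : ∀ x, ψ 0 x = x)
    (hzero : ∀ t ≥ (0:ℝ), ψ t 0 = 0)
    (hbound : ∀ ρ > (0:ℝ), ∃ t₀ ≥ (0:ℝ), ∃ a b : ℝ → ℝ,
      ContinuousOn a (Set.Icc 0 ρ) ∧ MonotoneOn a (Set.Icc 0 ρ) ∧ a 0 = 0 ∧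
      ContinuousOn b (Set.Ici t₀) ∧ AntitoneOn b (Set.Ici t₀) ∧
      Filter.Tendsto b Filter.atTop (nhds 0) ∧
      ∀ x : EuclideanSpace ℝ (Fin n), ‖x‖ ≤ ρ → ∀ t ≥ t₀, ‖ψ t x‖ ≤ a ‖x‖ * b t) :
    (∀ ε > (0:ℝ), ∃ δ > (0:ℝ), ∀ x : EuclideanSpace ℝ (Fin n), ‖x‖ ≤ δ →
        ∀ t ≥ (0:ℝ), ‖ψ t x‖ ≤ ε) ∧
    (∀ K : Set (EuclideanSpace ℝ (Fin n)), IsCompact K → ∀ ε > (0:ℝ),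
        ∃ T > (0:ℝ), ∀ t ≥ T, ∀ x ∈ K, ‖ψ t x‖ ≤ ε) := by
  constructor
  · -- stability
    intro ε hε
    obtain ⟨t₀, ht₀, a, b, hac, hamono, ha0, hbc, hbanti, hblim, hb⟩ := hbound 1 one_pos
    have hbnn : ∀ t ≥ t₀, 0 ≤ b t := bnonneg_aux hbanti hblim
    -- tube lemma for t ∈ [0, t₀]
    have hS : IsCompact (Set.Icc (0:ℝ) t₀ ×ˢ ({0} : Set (EuclideanSpace ℝ (Fin n)))) :=
      (isCompact_Icc).prod isCompact_singleton
    have hU : IsOpen {p : ℝ × EuclideanSpace ℝ (Fin n) | ‖ψ p.1 p.2‖ < ε} :=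
      isOpen_lt (continuous_norm.comp hcont) continuous_const
    have hsub : Set.Icc (0:ℝ) t₀ ×ˢ ({0} : Set (EuclideanSpace ℝ (Fin n))) ⊆
        {p | ‖ψ p.1 p.2‖ < ε} := by
      rintro ⟨t, x⟩ ⟨ht, hx⟩
      simp only [Set.mem_singleton_iff] at hx
      subst hx
      simp only [Set.mem_setOf_eq, hzero t ht.1, norm_zero]
      exact hε
    obtain ⟨u, v, hu, hv, hsu, hsv, huv⟩ := generalized_tube_lemma isCompact_Icc
      isCompact_singleton hU hsub
    have h0v : (0 : EuclideanSpace ℝ (Fin n)) ∈ v := hsv rfl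
    obtain ⟨δ₁, hδ₁, hball⟩ := Metric.isOpen_iff.1 hv 0 h0v
    -- small δ₂ for t ≥ t₀ using continuity of a at 0
    have hcw : ContinuousWithinAt a (Set.Icc 0 1) 0 := hac 0 ⟨le_refl 0, zero_le_one⟩
    rw [Metric.continuousWithinAt_iff] at hcw
    set c := ε / (b t₀ + 1) with hc
    have hbt₀1 : 0 < b t₀ + 1 := by linarith [hbnn t₀ (le_refl t₀)]
    have hcpos : 0 < c := div_pos hε hbt₀1
    obtain ⟨δ₂, hδ₂, hδ₂a⟩ := hcw c hcpos
    set δ := min (min (δ₁ / 2) (δ₂ / 2)) 1 with hδdef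
    have hδpos : 0 < δ := by positivity
    refine ⟨δ, hδpos, ?_⟩
    intro x hx t ht
    have hx1 : ‖x‖ ≤ 1 := le_trans hx (min_le_right _ _)
    rcases le_or_gt t t₀ with h | h
    · -- use tube
      have hxv : x ∈ v := by
        apply hball
        rw [Metric.mem_ball, dist_zero_right]
        calc ‖x‖ ≤ δ := hx
          _ ≤ δ₁ / 2 := le_trans (min_le_left _ _) (min_le_left _ _)
          _ < δ₁ := by linarith
      have hmem : (t, x) ∈ u ×ˢ v := ⟨hsu ⟨ht, h⟩, hxv⟩
      have := huv hmem
      simp only [Set.mem_setOf_eq] at this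
      exact this.le
    · -- use bound
      have haxc : a ‖x‖ < c := by
        have : dist (a ‖x‖) (a 0) < c := by
          apply hδ₂a ⟨norm_nonneg x, hx1⟩
          rw [Real.dist_eq, sub_zero, abs_of_nonneg (norm_nonneg x)]
          calc ‖x‖ ≤ δ := hx
            _ ≤ δ₂ / 2 := le_trans (min_le_left _ _) (min_le_right _ _)
            _ < δ₂ := by linarith
        rw [ha0, Real.dist_eq, sub_zero] at this
        exact lt_of_le_of_lt (le_abs_self _) this
      have haxnn : 0 ≤ a ‖x‖ := by
        have := hamono ⟨le_refl 0, zero_le_one⟩ ⟨norm_nonneg x, hx1⟩ (norm_nonneg x)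
        rw [ha0] at this; exact this
      have hbt : b t ≤ b t₀ := hbanti (Set.mem_Ici.2 (le_refl t₀)) (Set.mem_Ici.2 h.le) h.le
      have hbtnn : 0 ≤ b t := hbnn t h.le
      calc ‖ψ t x‖ ≤ a ‖x‖ * b t := hb x hx1 t h.le
        _ ≤ c * (b t₀ + 1) := by nlinarith
        _ = ε := by rw [hc]; exact div_mul_cancel₀ ε hbt₀1.ne'
  · -- attractivity
    intro K hK ε hε
    obtain ⟨r, hr⟩ := hK.isBounded.subset_closedBall 0
    set ρ := max r 1 with hρdef
    have hρpos : (0:ℝ) < ρ := lt_of_lt_of_le one_pos (le_max_right _ _)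
    obtain ⟨t₀, ht₀, a, b, hac, hamono, ha0, hbc, hbanti, hblim, hb⟩ := hbound ρ hρpos
    have hbnn : ∀ t ≥ t₀, 0 ≤ b t := bnonneg_aux hbanti hblim
    have haρnn : 0 ≤ a ρ := by
      have := hamono ⟨le_refl 0, hρpos.le⟩ ⟨hρpos.le, le_refl ρ⟩ hρpos.le
      rw [ha0] at this; exact this
    set c := ε / (a ρ + 1) with hc
    have hcpos : 0 < c := div_pos hε (by linarith)
    have hev : ∀ᶠ t in Filter.atTop, b t < c := hblim (Iio_mem_nhds hcpos)
    obtain ⟨T₁, hT₁⟩ := Filter.eventually_atTop.1 hev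
    refine ⟨max T₁ (max t₀ 1), lt_of_lt_of_le one_pos (le_trans (le_max_right _ _) (le_max_right _ _)), ?_⟩
    intro t ht x hxK
    have htt₀ : t₀ ≤ t := le_trans (le_trans (le_max_left _ _) (le_max_right _ _)) ht
    have htT₁ : T₁ ≤ t := le_trans (le_max_left _ _) ht
    have hxρ : ‖x‖ ≤ ρ := by
      have := hr hxK
      rw [Metric.mem_closedBall, dist_zero_right] at this
      exact le_trans this (le_max_left _ _)
    have hax : a ‖x‖ ≤ a ρ := hamono ⟨norm_nonneg x, hxρ⟩ ⟨hρpos.le, le_refl ρ⟩ hxρ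
    have haxnn : 0 ≤ a ‖x‖ := by
      have := hamono ⟨le_refl 0, hρpos.le⟩ ⟨norm_nonneg x, hxρ⟩ (norm_nonneg x)
      rw [ha0] at this; exact this
    have hbt : b t < c := hT₁ t htT₁
    have hbtnn : 0 ≤ b t := hbnn t htt₀
    calc ‖ψ t x‖ ≤ a ‖x‖ * b t := hb x hxρ t htt₀
      _ ≤ c * (a ρ + 1) := by nlinarith
      _ = ε := by rw [hc]; exact div_mul_cancel₀ ε (by linarith : (0:ℝ) < a ρ + 1).ne'
end

section
/- Let a ≤ b be nonzero reals, α : Fin n → ℝ with a ≤ αᵢ ≤ b for all i, and let Z₁ : ℝⁿ → ℝⁿ be continuous with ‖Z₁(x)‖ ≤ c₀ for all x ∈ ℝⁿ, where c₀ > 0. Let Y₁ be the vector field Y₁(x)ᵢ = αᵢ xᵢ + Z₁(x)ᵢ and let ψ be a forward flow of Y₁. Then for all x ∈ ℝⁿ and all t ≥ 0: (‖x‖ − c₀/a)·e^{a t} + c₀/a ≤ ‖ψ t x‖ ≤ (‖x‖ + c₀/b)·e^{b t} − c₀/b. -/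
open Filter Set Real
open scoped Topology RealInnerProductSpace

/-- Estimates for the flow of a bounded perturbation of a linear
vector field `Y₁(x)ᵢ = αᵢ xᵢ + Z₁(x)ᵢ` with `‖Z₁(x)‖ ≤ c₀`. -/
theorem stmt_1 (n : ℕ) (hn : 1 ≤ n) (a b c₀ : ℝ) (hab : a ≤ b) (ha : a ≠ 0) (hb : b ≠ 0)
    (α : Fin n → ℝ) (hα : ∀ i, a ≤ α i ∧ α i ≤ b)
    (Z₁ : EuclideanSpace ℝ (Fin n) → EuclideanSpace ℝ (Fin n))
    (hZcont : Continuous Z₁) (hc₀ : 0 < c₀) (hZ : ∀ x, ‖Z₁ x‖ ≤ c₀)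
    (Y₁ : EuclideanSpace ℝ (Fin n) → EuclideanSpace ℝ (Fin n))
    (hY₁ : ∀ x i, Y₁ x i = α i * x i + Z₁ x i)
    (ψ : ℝ → EuclideanSpace ℝ (Fin n) → EuclideanSpace ℝ (Fin n))
    (hψ0 : ∀ x, ψ 0 x = x)
    (hψ : ∀ t ≥ (0:ℝ), ∀ x, HasDerivAt (fun s => ψ s x) (Y₁ (ψ t x)) t) :
    ∀ x : EuclideanSpace ℝ (Fin n), ∀ t ≥ (0:ℝ),
      (‖x‖ - c₀ / a) * Real.exp (a * t) + c₀ / a ≤ ‖ψ t x‖ ∧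
      ‖ψ t x‖ ≤ (‖x‖ + c₀ / b) * Real.exp (b * t) - c₀ / b := by
  classical
  intro x t ht
  set φ : ℝ → EuclideanSpace ℝ (Fin n) := fun s => ψ s x with hφdef
  have hφ : ∀ s ≥ (0:ℝ), HasDerivAt φ (Y₁ (φ s)) s := fun s hs => hψ s hs x
  set f : ℝ → ℝ := fun s => ‖φ s‖ with hfdef
  set F : ℝ → ℝ := fun s =>
    if φ s = 0 then ‖Y₁ (φ s)‖ else (⟪φ s, Y₁ (φ s)⟫) / ‖φ s‖ with hFdef
  -- continuity of f on [0, t]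
  have hfc : ContinuousOn f (Icc 0 t) := fun s hs =>
    (continuous_norm.continuousAt.comp (hφ s hs.1).continuousAt).continuousWithinAt
  -- the key inner product estimate
  have hinner : ∀ u : EuclideanSpace ℝ (Fin n),
      a * ‖u‖ ^ 2 - c₀ * ‖u‖ ≤ ⟪u, Y₁ u⟫ ∧ ⟪u, Y₁ u⟫ ≤ b * ‖u‖ ^ 2 + c₀ * ‖u‖ := by
    intro u
    have hY : Y₁ u = (show EuclideanSpace ℝ (Fin n) from WithLp.toLp 2 (fun i => α i * u i)) + Z₁ u := by
      ext i; simp [hY₁]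
    have hsplit : ⟪u, Y₁ u⟫ = (∑ i, α i * (u i) ^ 2) + ⟪u, Z₁ u⟫ := by
      rw [hY, inner_add_right]
      congr 1
      rw [PiLp.inner_apply]
      apply Finset.sum_congr rfl
      intro i _
      simp [RCLike.inner_apply]
      ring
    have hsum : ∑ i, (u i) ^ 2 = ‖u‖ ^ 2 := by
      rw [← real_inner_self_eq_norm_sq, PiLp.inner_apply]
      apply Finset.sum_congr rfl
      intro i _
      simp [RCLike.inner_apply]
    have hub : ∑ i, α i * (u i) ^ 2 ≤ b * ‖u‖ ^ 2 := by
      rw [← hsum, Finset.mul_sum]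
      exact Finset.sum_le_sum fun i _ =>
        mul_le_mul_of_nonneg_right (hα i).2 (sq_nonneg _)
    have hlb : a * ‖u‖ ^ 2 ≤ ∑ i, α i * (u i) ^ 2 := by
      rw [← hsum, Finset.mul_sum]
      exact Finset.sum_le_sum fun i _ =>
        mul_le_mul_of_nonneg_right (hα i).1 (sq_nonneg _)
    have hZb : |⟪u, Z₁ u⟫| ≤ c₀ * ‖u‖ := by
      calc |⟪u, Z₁ u⟫| ≤ ‖u‖ * ‖Z₁ u‖ := abs_real_inner_le_norm u (Z₁ u)
        _ ≤ ‖u‖ * c₀ := mul_le_mul_of_nonneg_left (hZ u) (norm_nonneg _)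
        _ = c₀ * ‖u‖ := mul_comm _ _
    have h1 := abs_le.mp hZb
    constructor
    · rw [hsplit]; linarith
    · rw [hsplit]; linarith
  -- the slope of f tends to F s from the right
  have hslope : ∀ s ≥ (0:ℝ),
      Tendsto (fun z => (z - s)⁻¹ * (f z - f s)) (𝓝[>] s) (𝓝 (F s)) := by
    intro s hs
    rcases eq_or_ne (φ s) 0 with h0 | h0
    · -- φ s = 0 : the slope of f equals the norm of the slope of φ
      have hF : F s = ‖Y₁ (φ s)‖ := if_pos h0
      rw [hF]
      have h1 : Tendsto (slope φ s) (𝓝[≠] s) (𝓝 (Y₁ (φ s))) :=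
        hasDerivAt_iff_tendsto_slope.mp (hφ s hs)
      have h2 : Tendsto (fun z => ‖slope φ s z‖) (𝓝[>] s) (𝓝 ‖Y₁ (φ s)‖) :=
        (continuous_norm.continuousAt.tendsto.comp
          (h1.mono_left (nhdsWithin_mono s fun z hz => ne_of_gt hz)))
      apply h2.congr'
      filter_upwards [self_mem_nhdsWithin] with z hz
      have hzs : (0:ℝ) < z - s := sub_pos.mpr hz
      rw [slope_def_module, norm_smul, norm_inv, Real.norm_eq_abs,
        abs_of_pos hzs, h0, sub_zero]
      have : f z - f s = ‖φ z‖ := by simp [hfdef, h0]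
      rw [this]
    · -- φ s ≠ 0 : f is differentiable at s with derivative F s
      have hF : F s = ⟪φ s, Y₁ (φ s)⟫ / ‖φ s‖ := if_neg h0
      have hg : HasDerivAt (fun z => ⟪φ z, φ z⟫)
          (⟪φ s, Y₁ (φ s)⟫ + ⟪Y₁ (φ s), φ s⟫) s :=
        HasDerivAt.inner ℝ (hφ s hs) (hφ s hs)
      have hgs : ⟪φ s, φ s⟫ ≠ 0 := by
        rw [real_inner_self_eq_norm_sq]
        exact pow_ne_zero _ (norm_ne_zero_iff.mpr h0)
      have hsq : HasDerivAt (fun z => Real.sqrt ⟪φ z, φ z⟫)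
          ((1 / (2 * Real.sqrt ⟪φ s, φ s⟫)) *
            (⟪φ s, Y₁ (φ s)⟫ + ⟪Y₁ (φ s), φ s⟫)) s :=
        (Real.hasDerivAt_sqrt hgs).comp s hg
      have heq : (fun z => Real.sqrt ⟪φ z, φ z⟫) = f := by
        funext z
        rw [real_inner_self_eq_norm_mul_norm, Real.sqrt_mul_self (norm_nonneg _)]
      have hfd : HasDerivAt f (F s) s := by
        rw [← heq, hF]
        convert hsq using 1
        rw [real_inner_self_eq_norm_mul_norm, Real.sqrt_mul_self (norm_nonneg _),
          real_inner_comm (Y₁ (φ s)) (φ s)]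
        field_simp
        ring
      have h1 : Tendsto (slope f s) (𝓝[≠] s) (𝓝 (F s)) :=
        hasDerivAt_iff_tendsto_slope.mp hfd
      exact (h1.mono_left (nhdsWithin_mono s fun z hz => ne_of_gt hz)).congr
        fun z => by rw [slope_def_module]; simp [smul_eq_mul]
  -- Upper bound: apply Grönwall to f with K = b, ε = c₀
  have hupper : f t ≤ gronwallBound ‖x‖ b c₀ (t - 0) := by
    apply le_gronwallBound_of_liminf_deriv_right_le hfc
      (f' := F) ?_ ?_ ?_ t (right_mem_Icc.mpr ht)
    · intro s hs r hr
      exact ((hslope s hs.1).eventually (gt_mem_nhds hr)).frequently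
    · simp [hfdef, hφdef, hψ0]
    · intro s hs
      by_cases h0 : φ s = 0
      · have hFs : F s = ‖Y₁ (φ s)‖ := if_pos h0
        have hY : Y₁ (φ s) = Z₁ (φ s) := by
          ext i
          rw [hY₁]
          have : (φ s) i = 0 := by rw [h0]; rfl
          rw [this]; ring
        have hfs : f s = 0 := by simp [hfdef, h0]
        rw [hFs, hY, hfs]
        have := hZ (φ s)
        linarith
      · have hFs : F s = ⟪φ s, Y₁ (φ s)⟫ / ‖φ s‖ := if_neg h0
        have hpos : 0 < ‖φ s‖ := norm_pos_iff.mpr h0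
        have hfs : f s = ‖φ s‖ := rfl
        rw [hFs, hfs, div_le_iff₀ hpos]
        nlinarith [(hinner (φ s)).2]
  -- Lower bound: apply Grönwall to -f with K = a, ε = c₀
  have hlower : -f t ≤ gronwallBound (-‖x‖) a c₀ (t - 0) := by
    apply le_gronwallBound_of_liminf_deriv_right_le
      (f := fun z => -f z) (f' := fun z => -F z) (hfc.neg) ?_ ?_ ?_ t (right_mem_Icc.mpr ht)
    · intro s hs r hr
      have : Tendsto (fun z => (z - s)⁻¹ * (-f z - -f s)) (𝓝[>] s) (𝓝 (-F s)) := by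
        have := (hslope s hs.1).neg
        apply this.congr
        intro z; ring
      exact (this.eventually (gt_mem_nhds hr)).frequently
    · simp [hfdef, hφdef, hψ0]
    · intro s hs
      show -F s ≤ a * -f s + c₀
      by_cases h0 : φ s = 0
      · have hFs : F s = ‖Y₁ (φ s)‖ := if_pos h0
        have hfs : f s = 0 := by simp [hfdef, h0]
        rw [hFs, hfs]
        have := norm_nonneg (Y₁ (φ s))
        linarith
      · have hFs : F s = ⟪φ s, Y₁ (φ s)⟫ / ‖φ s‖ := if_neg h0
        have hpos : 0 < ‖φ s‖ := norm_pos_iff.mpr h0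
        have hfs : f s = ‖φ s‖ := rfl
        have h1 : a * ‖φ s‖ - c₀ ≤ ⟪φ s, Y₁ (φ s)⟫ / ‖φ s‖ := by
          rw [le_div_iff₀ hpos]
          nlinarith [(hinner (φ s)).1]
        rw [hFs, hfs]
        linarith
  constructor
  · rw [gronwallBound_of_K_ne_0 ha] at hlower
    simp only [sub_zero] at hlower
    have : f t = ‖ψ t x‖ := rfl
    nlinarith [hlower]
  · rw [gronwallBound_of_K_ne_0 hb] at hupper
    simp only [sub_zero] at hupper
    have : f t = ‖ψ t x‖ := rfl
    nlinarith [hupper]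
end

section
/- Let a ≤ b be reals, α : Fin n → ℝ with a ≤ αᵢ ≤ b for all i, and let Z₁ : ℝⁿ → ℝⁿ be continuous satisfying, for some integer m ≥ 1 and constants c₀′, c₀″ > 0: ‖Z₁(x)‖ ≤ c₀′‖x‖^{1+m} for all x with ‖x‖ ≤ 1, and ‖Z₁(x)‖ ≤ c₀″‖x‖ for all x with ‖x‖ ≥ 1. Set c₀ = max(c₀′, c₀″), a₀ = a − c₀, b₀ = b + c₀. Let Y₁(x)ᵢ = αᵢ xᵢ + Z₁(x)ᵢ and let ψ be a flow of Y₁ defined for all t ∈ ℝ. Then for all x ∈ ℝⁿ and all t ≥ 0: ‖x‖e^{a₀ t} ≤ ‖ψ t x‖ ≤ ‖x‖e^{b₀ t}, and ‖x‖e^{−b₀ t} ≤ ‖ψ (−t) x‖ ≤ ‖x‖e^{−a₀ t}. -/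
open RealInnerProductSpace

/-- Two-sided exponential estimates for the flow (defined for all
`t ∈ ℝ`) of `Y₁(x)ᵢ = αᵢ xᵢ + Z₁(x)ᵢ` under superlinear smallness of `Z₁` near
the origin and linear growth bounds away from it. -/
theorem stmt_2 (n : ℕ) (hn : 1 ≤ n) (a b : ℝ) (hab : a ≤ b)
    (α : Fin n → ℝ) (hα : ∀ i, a ≤ α i ∧ α i ≤ b)
    (m : ℕ) (hm : 1 ≤ m) (c₀' c₀'' : ℝ) (hc₀' : 0 < c₀') (hc₀'' : 0 < c₀'')
    (Z₁ : EuclideanSpace ℝ (Fin n) → EuclideanSpace ℝ (Fin n))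
    (hZcont : Continuous Z₁)
    (hZ₁ : ∀ x : EuclideanSpace ℝ (Fin n), ‖x‖ ≤ 1 → ‖Z₁ x‖ ≤ c₀' * ‖x‖ ^ (1 + m))
    (hZ₂ : ∀ x : EuclideanSpace ℝ (Fin n), 1 ≤ ‖x‖ → ‖Z₁ x‖ ≤ c₀'' * ‖x‖)
    (c₀ a₀ b₀ : ℝ) (hc₀ : c₀ = max c₀' c₀'') (ha₀ : a₀ = a - c₀) (hb₀ : b₀ = b + c₀)
    (Y₁ : EuclideanSpace ℝ (Fin n) → EuclideanSpace ℝ (Fin n))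
    (hY₁ : ∀ x i, Y₁ x i = α i * x i + Z₁ x i)
    (ψ : ℝ → EuclideanSpace ℝ (Fin n) → EuclideanSpace ℝ (Fin n))
    (hψ0 : ∀ x, ψ 0 x = x)
    (hψ : ∀ t : ℝ, ∀ x, HasDerivAt (fun s => ψ s x) (Y₁ (ψ t x)) t) :
    ∀ x : EuclideanSpace ℝ (Fin n), ∀ t ≥ (0:ℝ),
      (‖x‖ * Real.exp (a₀ * t) ≤ ‖ψ t x‖ ∧ ‖ψ t x‖ ≤ ‖x‖ * Real.exp (b₀ * t)) ∧
      (‖x‖ * Real.exp (-b₀ * t) ≤ ‖ψ (-t) x‖ ∧ ‖ψ (-t) x‖ ≤ ‖x‖ * Real.exp (-a₀ * t)) := by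
  -- linear bound on Z₁ everywhere
  have hZ : ∀ y : EuclideanSpace ℝ (Fin n), ‖Z₁ y‖ ≤ c₀ * ‖y‖ := by
    intro y
    rcases le_or_gt ‖y‖ 1 with h | h
    · calc ‖Z₁ y‖ ≤ c₀' * ‖y‖ ^ (1 + m) := hZ₁ y h
        _ ≤ c₀' * ‖y‖ := by
            have h1 : ‖y‖ ^ (1 + m) ≤ ‖y‖ ^ 1 :=
              pow_le_pow_of_le_one (norm_nonneg y) h (by omega)
            have := mul_le_mul_of_nonneg_left h1 hc₀'.le
            simpa using this
        _ ≤ c₀ * ‖y‖ :=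
            mul_le_mul_of_nonneg_right (by rw [hc₀]; exact le_max_left _ _) (norm_nonneg y)
    · calc ‖Z₁ y‖ ≤ c₀'' * ‖y‖ := hZ₂ y h.le
        _ ≤ c₀ * ‖y‖ :=
            mul_le_mul_of_nonneg_right (by rw [hc₀]; exact le_max_right _ _) (norm_nonneg y)
  -- key inner-product bound
  have key : ∀ y : EuclideanSpace ℝ (Fin n),
      a₀ * ‖y‖ ^ 2 ≤ ⟪y, Y₁ y⟫ ∧ ⟪y, Y₁ y⟫ ≤ b₀ * ‖y‖ ^ 2 := by
    intro y
    have hny : ‖y‖ ^ 2 = ∑ i, (y i) ^ 2 := by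
      rw [EuclideanSpace.norm_eq, Real.sq_sqrt (by positivity)]
      simp [sq_abs]
    have hsplit : ⟪y, Y₁ y⟫ = (∑ i, α i * (y i) ^ 2) + ⟪y, Z₁ y⟫ := by
      rw [PiLp.inner_apply, PiLp.inner_apply, ← Finset.sum_add_distrib]
      apply Finset.sum_congr rfl
      intro i _
      simp only [RCLike.inner_apply, conj_trivial, hY₁]
      ring
    have hZin : |⟪y, Z₁ y⟫| ≤ c₀ * ‖y‖ ^ 2 := by
      calc |⟪y, Z₁ y⟫| ≤ ‖y‖ * ‖Z₁ y‖ := abs_real_inner_le_norm y (Z₁ y)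
        _ ≤ ‖y‖ * (c₀ * ‖y‖) := mul_le_mul_of_nonneg_left (hZ y) (norm_nonneg y)
        _ = c₀ * ‖y‖ ^ 2 := by ring
    have hlow : a * ‖y‖ ^ 2 ≤ ∑ i, α i * (y i) ^ 2 := by
      rw [hny, Finset.mul_sum]
      exact Finset.sum_le_sum fun i _ =>
        mul_le_mul_of_nonneg_right (hα i).1 (sq_nonneg _)
    have hhigh : (∑ i, α i * (y i) ^ 2) ≤ b * ‖y‖ ^ 2 := by
      rw [hny, Finset.mul_sum]
      exact Finset.sum_le_sum fun i _ =>
        mul_le_mul_of_nonneg_right (hα i).2 (sq_nonneg _)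
    have habs := abs_le.mp hZin
    constructor
    · rw [hsplit, ha₀]; nlinarith [habs.1]
    · rw [hsplit, hb₀]; nlinarith [habs.2]
  intro x t ht
  set f : ℝ → ℝ := fun s => ‖ψ s x‖ ^ 2 with hf_def
  have hf : ∀ s : ℝ, HasDerivAt f (2 * ⟪ψ s x, Y₁ (ψ s x)⟫) s := by
    intro s
    have h1 := (hψ s x).inner ℝ (hψ s x)
    have h2 : (fun u => ⟪ψ u x, ψ u x⟫) = f := by
      funext u
      exact real_inner_self_eq_norm_sq _
    rw [h2] at h1
    exact h1.congr_deriv (by rw [real_inner_comm (Y₁ (ψ s x)) (ψ s x)]; ring)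
  have f0 : f 0 = ‖x‖ ^ 2 := by simp [hf_def, hψ0]
  -- monotone auxiliary functions
  have aux : ∀ c : ℝ,
      (∀ y : EuclideanSpace ℝ (Fin n), ⟪y, Y₁ y⟫ ≤ c * ‖y‖ ^ 2) →
      Antitone (fun s => Real.exp (-(2 * c) * s) * f s) := by
    intro c hc'
    have hg : ∀ s : ℝ, HasDerivAt (fun u => Real.exp (-(2 * c) * u) * f u)
        (Real.exp (-(2 * c) * s) * (-(2 * c)) * f s
          + Real.exp (-(2 * c) * s) * (2 * ⟪ψ s x, Y₁ (ψ s x)⟫)) s := by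
      intro s
      have h := (((hasDerivAt_id s).const_mul (-(2 * c))).exp).mul (hf s)
      simp only [id_eq, mul_one] at h
      exact h
    apply antitone_of_deriv_nonpos
    · exact fun s => ((hg s).differentiableAt)
    · intro s
      rw [(hg s).deriv]
      have h1 := hc' (ψ s x)
      have h4 := mul_le_mul_of_nonneg_left h1 (Real.exp_pos (-(2 * c) * s)).le
      have h3 : f s = ‖ψ s x‖ ^ 2 := rfl
      rw [h3]
      nlinarith [h4]
  have aux2 : ∀ c : ℝ,
      (∀ y : EuclideanSpace ℝ (Fin n), c * ‖y‖ ^ 2 ≤ ⟪y, Y₁ y⟫) →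
      Monotone (fun s => Real.exp (-(2 * c) * s) * f s) := by
    intro c hc'
    have hg : ∀ s : ℝ, HasDerivAt (fun u => Real.exp (-(2 * c) * u) * f u)
        (Real.exp (-(2 * c) * s) * (-(2 * c)) * f s
          + Real.exp (-(2 * c) * s) * (2 * ⟪ψ s x, Y₁ (ψ s x)⟫)) s := by
      intro s
      have h := (((hasDerivAt_id s).const_mul (-(2 * c))).exp).mul (hf s)
      simp only [id_eq, mul_one] at h
      exact h
    apply monotone_of_deriv_nonneg
    · exact fun s => ((hg s).differentiableAt)
    · intro s
      rw [(hg s).deriv]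
      have h1 := hc' (ψ s x)
      have h4 := mul_le_mul_of_nonneg_left h1 (Real.exp_pos (-(2 * c) * s)).le
      have h3 : f s = ‖ψ s x‖ ^ 2 := rfl
      rw [h3]
      nlinarith [h4]
  have hB := aux b₀ (fun y => (key y).2)
  have hA := aux2 a₀ (fun y => (key y).1)
  have hBt := hB ht
  have hBt' := hB (neg_nonpos_of_nonneg ht)
  have hAt := hA ht
  have hAt' := hA (neg_nonpos_of_nonneg ht)
  simp only [mul_zero, Real.exp_zero, one_mul, f0, neg_mul, neg_neg] at hBt hBt' hAt hAt'
  -- hBt : exp (-(2*b₀*t)) * f t ≤ ‖x‖^2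
  -- hBt' : ‖x‖^2 ≤ exp (2*b₀*t) * f (-t)
  -- arithmetic helpers
  have step : ∀ r A B : ℝ, Real.exp (-r) * A ≤ B → A ≤ B * Real.exp r := by
    intro r A B h
    have h2 := mul_le_mul_of_nonneg_right h (Real.exp_pos r).le
    have h3 : Real.exp (-r) * A * Real.exp r = A := by
      rw [mul_comm (Real.exp (-r)) A, mul_assoc, ← Real.exp_add]
      simp
    linarith
  have step2 : ∀ r A B : ℝ, B ≤ Real.exp (-r) * A → B * Real.exp r ≤ A := by
    intro r A B h
    have h2 := mul_le_mul_of_nonneg_right h (Real.exp_pos r).le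
    have h3 : Real.exp (-r) * A * Real.exp r = A := by
      rw [mul_comm (Real.exp (-r)) A, mul_assoc, ← Real.exp_add]
      simp
    linarith
  -- conversion from squares to norms
  have conv1 : ∀ (u : EuclideanSpace ℝ (Fin n)) (r : ℝ),
      ‖u‖ ^ 2 ≤ ‖x‖ ^ 2 * Real.exp (2 * r) → ‖u‖ ≤ ‖x‖ * Real.exp r := by
    intro u r h
    refine le_of_pow_le_pow_left₀ two_ne_zero (by positivity) ?_
    rw [mul_pow, pow_two (Real.exp r), ← Real.exp_add, ← two_mul]
    exact h
  have conv2 : ∀ (u : EuclideanSpace ℝ (Fin n)) (r : ℝ),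
      ‖x‖ ^ 2 * Real.exp (2 * r) ≤ ‖u‖ ^ 2 → ‖x‖ * Real.exp r ≤ ‖u‖ := by
    intro u r h
    refine le_of_pow_le_pow_left₀ two_ne_zero (norm_nonneg u) ?_
    rw [mul_pow, pow_two (Real.exp r), ← Real.exp_add, ← two_mul]
    exact h
  refine ⟨⟨?_, ?_⟩, ?_, ?_⟩
  · -- ‖x‖ * exp (a₀ t) ≤ ‖ψ t x‖
    refine conv2 (ψ t x) (a₀ * t) ?_
    have h := step2 (2 * a₀ * t) (f t) (‖x‖ ^ 2) hAt
    calc ‖x‖ ^ 2 * Real.exp (2 * (a₀ * t)) = ‖x‖ ^ 2 * Real.exp (2 * a₀ * t) := by ring_nf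
      _ ≤ f t := h
      _ = ‖ψ t x‖ ^ 2 := rfl
  · -- ‖ψ t x‖ ≤ ‖x‖ * exp (b₀ t)
    refine conv1 (ψ t x) (b₀ * t) ?_
    have h := step (2 * b₀ * t) (f t) (‖x‖ ^ 2) hBt
    calc ‖ψ t x‖ ^ 2 = f t := rfl
      _ ≤ ‖x‖ ^ 2 * Real.exp (2 * b₀ * t) := h
      _ = ‖x‖ ^ 2 * Real.exp (2 * (b₀ * t)) := by ring_nf
  · -- ‖x‖ * exp (-b₀ t) ≤ ‖ψ (-t) x‖
    refine conv2 (ψ (-t) x) (-b₀ * t) ?_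
    have h' : ‖x‖ ^ 2 ≤ Real.exp (-(-(2 * b₀ * t))) * f (-t) := by
      rw [show -(-(2 * b₀ * t)) = -(2 * b₀ * -t) from by ring]; exact hBt'
    have h := step2 (-(2 * b₀ * t)) (f (-t)) (‖x‖ ^ 2) h'
    calc ‖x‖ ^ 2 * Real.exp (2 * (-b₀ * t)) = ‖x‖ ^ 2 * Real.exp (-(2 * b₀ * t)) := by ring_nf
      _ ≤ f (-t) := h
      _ = ‖ψ (-t) x‖ ^ 2 := rfl
  · -- ‖ψ (-t) x‖ ≤ ‖x‖ * exp (-a₀ t)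
    refine conv1 (ψ (-t) x) (-a₀ * t) ?_
    have h' : Real.exp (-(-(2 * a₀ * t))) * f (-t) ≤ ‖x‖ ^ 2 := by
      rw [show -(-(2 * a₀ * t)) = -(2 * a₀ * -t) from by ring]; exact hAt'
    have h := step (-(2 * a₀ * t)) (f (-t)) (‖x‖ ^ 2) h'
    calc ‖ψ (-t) x‖ ^ 2 = f (-t) := rfl
      _ ≤ ‖x‖ ^ 2 * Real.exp (-(2 * a₀ * t)) := h
      _ = ‖x‖ ^ 2 * Real.exp (2 * (-a₀ * t)) := by ring_nf
end

section
/- Let a ≤ αᵢ ≤ b < 0, a′ ≤ βᵢ ≤ b′ ≤ 0, and let each mᵢ be an even positive integer. Define φ : ℝ → ℝⁿ → ℝⁿ coordinatewise by (φ t x)ᵢ = xᵢ e^{αᵢ t} (1 + (βᵢ/αᵢ) xᵢ^{mᵢ} (1 − e^{αᵢ mᵢ t}))^{−1/mᵢ}. Then for every t ≥ 0, φ is a forward flow of the vector field X₃(x)ᵢ = αᵢ xᵢ + βᵢ xᵢ^{1+mᵢ}, i.e. φ 0 x = x and (d/ds)(φ s x)ᵢ at s = t equals αᵢ(φ t x)ᵢ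 + βᵢ(φ t x)ᵢ^{1+mᵢ}; moreover ‖φ t x‖ ≤ ‖x‖ e^{b t} for all t ≥ 0 and all x ∈ ℝⁿ. -/
lemma aux_deriv (α β : ℝ) (hα : α < 0) (hβ : β ≤ 0) (m : ℕ) (hm : 0 < m) (hme : Even m)
    (x t : ℝ) (ht : 0 ≤ t) :
    HasDerivAt (fun s => x * Real.exp (α * s) *
        (1 + β / α * x ^ m * (1 - Real.exp (α * m * s))) ^ (-(1:ℝ) / m))
      (α * (x * Real.exp (α * t) *
          (1 + β / α * x ^ m * (1 - Real.exp (α * m * t))) ^ (-(1:ℝ) / m))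
       + β * (x * Real.exp (α * t) *
          (1 + β / α * x ^ m * (1 - Real.exp (α * m * t))) ^ (-(1:ℝ) / m)) ^ (1 + m)) t := by
  have hα0 : α ≠ 0 := hα.ne
  have hm0 : (m : ℝ) ≠ 0 := Nat.cast_ne_zero.mpr hm.ne'
  set c : ℝ := β / α * x ^ m with hc_def
  have hc : 0 ≤ c :=
    mul_nonneg (div_nonneg_of_nonpos hβ hα.le) (hme.pow_nonneg x)
  set G : ℝ := 1 + c * (1 - Real.exp (α * m * t)) with hG_def
  have hexple : Real.exp (α * m * t) ≤ 1 := by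
    apply Real.exp_le_one_iff.mpr
    have hmn : (0:ℝ) ≤ (m:ℝ) * t := mul_nonneg (Nat.cast_nonneg m) ht
    nlinarith
  have hG1 : 1 ≤ G := by nlinarith [hc, hexple]
  have hGpos : 0 < G := lt_of_lt_of_le one_pos hG1
  have hGne : G ≠ 0 := hGpos.ne'
  have hlin1 : HasDerivAt (fun s : ℝ => α * s) α t := by
    simpa using (hasDerivAt_id t).const_mul α
  have hexp1 := hlin1.exp
  have hlin2 : HasDerivAt (fun s : ℝ => α * m * s) (α * m) t := by
    simpa using (hasDerivAt_id t).const_mul (α * m)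
  have hexp2 := hlin2.exp
  have hg : HasDerivAt (fun s => 1 + c * (1 - Real.exp (α * m * s)))
      (c * (-(Real.exp (α * m * t) * (α * m)))) t :=
    ((hexp2.const_sub 1).const_mul c).const_add 1
  have hrpow := hg.rpow_const (p := -(1:ℝ)/m) (Or.inl hGne)
  have hmain := (hexp1.const_mul x).mul hrpow
  convert hmain using 1
  case e'_4 => rfl
  case e'_5 => rfl
  case e'_8 => rfl
  have h1 : G ^ ((-(1:ℝ)/m) - 1) = G ^ (-(1:ℝ)/m) / G := by
    rw [Real.rpow_sub hGpos, Real.rpow_one]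
  have h2 : (G ^ (-(1:ℝ)/m)) ^ (1 + m) = G ^ (-(1:ℝ)/m) / G := by
    rw [← Real.rpow_natCast (G ^ (-(1:ℝ)/m)) (1 + m), ← Real.rpow_mul hGpos.le]
    rw [← h1]
    congr 1
    push_cast
    field_simp
    ring
  have h3 : Real.exp (α * t) ^ (1 + m) = Real.exp (α * t) * Real.exp (α * m * t) := by
    rw [← Real.exp_nat_mul, ← Real.exp_add]
    push_cast
    ring_nf
  rw [mul_pow, mul_pow, h2, h3, h1, hc_def]
  set E1 : ℝ := Real.exp (α * t) with hE1
  set E2 : ℝ := Real.exp (α * m * t) with hE2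
  set P : ℝ := G ^ (-(1:ℝ)/m) with hP
  clear_value E1 E2 P
  clear_value G
  field_simp
  ring

lemma aux_bound (α β b : ℝ) (hα : α < 0) (hab : α ≤ b) (hβ : β ≤ 0) (m : ℕ) (hm : 0 < m)
    (hme : Even m) (x t : ℝ) (ht : 0 ≤ t) :
    |x * Real.exp (α * t) * (1 + β / α * x ^ m * (1 - Real.exp (α * m * t))) ^ (-(1:ℝ) / m)|
      ≤ |x| * Real.exp (b * t) := by
  have hm0 : (0:ℝ) < m := Nat.cast_pos.mpr hm
  have hc : 0 ≤ β / α * x ^ m :=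
    mul_nonneg (div_nonneg_of_nonpos hβ hα.le) (hme.pow_nonneg x)
  have hexple : Real.exp (α * m * t) ≤ 1 := by
    apply Real.exp_le_one_iff.mpr
    have hmn : (0:ℝ) ≤ (m:ℝ) * t := mul_nonneg (Nat.cast_nonneg m) ht
    nlinarith
  have hG1 : 1 ≤ 1 + β / α * x ^ m * (1 - Real.exp (α * m * t)) := by nlinarith
  have hGpos : (0:ℝ) < 1 + β / α * x ^ m * (1 - Real.exp (α * m * t)) := by linarith
  have hP1 : (1 + β / α * x ^ m * (1 - Real.exp (α * m * t))) ^ (-(1:ℝ) / m) ≤ 1 :=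
    Real.rpow_le_one_of_one_le_of_nonpos hG1 (by
      have h1 : (0:ℝ) ≤ 1 / m := by positivity
      rw [neg_div]
      linarith)
  have hPpos : (0:ℝ) ≤ (1 + β / α * x ^ m * (1 - Real.exp (α * m * t))) ^ (-(1:ℝ) / m) :=
    (Real.rpow_pos_of_pos hGpos _).le
  rw [abs_mul, abs_mul, abs_of_nonneg (Real.exp_nonneg _), abs_of_nonneg hPpos]
  calc |x| * Real.exp (α * t) * _ ≤ |x| * Real.exp (α * t) * 1 := by
        apply mul_le_mul_of_nonneg_left hP1 (by positivity)
    _ = |x| * Real.exp (α * t) := by ring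
    _ ≤ |x| * Real.exp (b * t) := by
        apply mul_le_mul_of_nonneg_left _ (abs_nonneg x)
        exact Real.exp_le_exp.mpr (by nlinarith)


/-- The explicit Bernoulli-type formula defines a forward flow of
the binomial vector field `X₃(x)ᵢ = αᵢ xᵢ + βᵢ xᵢ^{1+mᵢ}`, together with the
estimate `‖φ t x‖ ≤ ‖x‖ e^{bt}`. -/
theorem stmt_4 (n : ℕ) (hn : 1 ≤ n) (a b a' b' : ℝ) (hb : b < 0) (hb' : b' ≤ 0)
    (α β : Fin n → ℝ) (hα : ∀ i, a ≤ α i ∧ α i ≤ b) (hβ : ∀ i, a' ≤ β i ∧ β i ≤ b')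
    (m : Fin n → ℕ) (hme : ∀ i, Even (m i)) (hmp : ∀ i, 0 < m i)
    (φ : ℝ → EuclideanSpace ℝ (Fin n) → EuclideanSpace ℝ (Fin n))
    (hφ : ∀ t x i, φ t x i =
      x i * Real.exp (α i * t) *
        (1 + β i / α i * x i ^ m i * (1 - Real.exp (α i * (m i : ℝ) * t))) ^ (-(1:ℝ) / m i)) :
    (∀ x : EuclideanSpace ℝ (Fin n), φ 0 x = x) ∧
    (∀ t ≥ (0:ℝ), ∀ x : EuclideanSpace ℝ (Fin n), ∀ i : Fin n,
      HasDerivAt (fun s => φ s x i) (α i * φ t x i + β i * φ t x i ^ (1 + m i)) t) ∧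
    (∀ t ≥ (0:ℝ), ∀ x : EuclideanSpace ℝ (Fin n), ‖φ t x‖ ≤ ‖x‖ * Real.exp (b * t)) := by
  have hαneg : ∀ i, α i < 0 := fun i => lt_of_le_of_lt (hα i).2 hb
  have hβnp : ∀ i, β i ≤ 0 := fun i => le_trans (hβ i).2 hb'
  refine ⟨?_, ?_, ?_⟩
  · intro x
    ext i
    rw [hφ]
    simp [Real.one_rpow]
  · intro t ht x i
    simp only [hφ]
    exact aux_deriv (α i) (β i) (hαneg i) (hβnp i) (m i) (hmp i) (hme i) (x i) t ht
  · intro t ht x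
    have key : ∀ i, ‖φ t x i‖ ≤ ‖x i‖ * Real.exp (b * t) := by
      intro i
      rw [hφ, Real.norm_eq_abs, Real.norm_eq_abs]
      exact aux_bound (α i) (β i) b (hαneg i) (hα i).2 (hβnp i) (m i) (hmp i) (hme i) (x i) t ht
    calc ‖φ t x‖ = Real.sqrt (∑ i, ‖φ t x i‖ ^ 2) := EuclideanSpace.norm_eq _
      _ ≤ Real.sqrt (∑ i, (‖x i‖ * Real.exp (b * t)) ^ 2) := by
          apply Real.sqrt_le_sqrt
          apply Finset.sum_le_sum
          intro i _
          exact pow_le_pow_left₀ (norm_nonneg _) (key i) 2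
      _ = Real.sqrt ((∑ i, ‖x i‖ ^ 2) * Real.exp (b * t) ^ 2) := by
          congr 1
          rw [Finset.sum_mul]
          exact Finset.sum_congr rfl fun i _ => by rw [mul_pow]
      _ = Real.sqrt (∑ i, ‖x i‖ ^ 2) * Real.sqrt (Real.exp (b * t) ^ 2) :=
          Real.sqrt_mul (Finset.sum_nonneg fun i _ => sq_nonneg _) _
      _ = ‖x‖ * Real.exp (b * t) := by
          rw [Real.sqrt_sq (Real.exp_nonneg _), ← EuclideanSpace.norm_eq]
end

section
/- Let a ≤ b be reals, α : Fin n → ℝ with a ≤ αᵢ ≤ b for all i, and let Z₁ : ℝⁿ → ℝⁿ be differentiable with ‖DZ₁(x)‖ ≤ c₁ (operator norm) for all x ∈ ℝⁿ, where c₁ > 0. Set a₁ = a − c₁, b₁ = b + c₁. Let Y₁(x)ᵢ = αᵢ xᵢ + Z₁(x)ᵢ, let ψ be a forward flow of Y₁, and let η be a first variation of ψ at x ∈ ℝⁿ with initial vector ν ∈ ℝⁿ. Then for all t ≥ 0: ‖ν‖e^{a₁ t} ≤ ‖η t‖ ≤ ‖ν‖e^{b₁ t}. -/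
open scoped RealInnerProductSpace

/-- Auxiliary Gronwall-type lemma: if `f' t ≤ c * f t` for `t ≥ 0`,
then `f t ≤ f 0 * exp (c * t)` for `t ≥ 0`. -/
lemma stmt5_gronwall (f f' : ℝ → ℝ) (c : ℝ)
    (hderiv : ∀ t ≥ (0:ℝ), HasDerivAt f (f' t) t)
    (hle : ∀ t ≥ (0:ℝ), f' t ≤ c * f t) :
    ∀ t ≥ (0:ℝ), f t ≤ f 0 * Real.exp (c * t) := by
  set G : ℝ → ℝ := fun t => f t * Real.exp (-c * t) with hGdef
  have hG : ∀ t ≥ (0:ℝ), HasDerivAt G (f' t * Real.exp (-c * t)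
      + f t * (Real.exp (-c * t) * (-c))) t := by
    intro t ht
    have he : HasDerivAt (fun s => Real.exp (-c * s)) (Real.exp (-c * t) * (-c)) t := by
      have := ((hasDerivAt_id t).const_mul (-c)).exp
      simpa [mul_comm] using this
    exact (hderiv t ht).mul he
  have hanti : AntitoneOn G (Set.Ici (0:ℝ)) := by
    apply antitoneOn_of_deriv_nonpos (convex_Ici 0)
    · exact fun t ht => ((hG t ht).continuousAt).continuousWithinAt
    · intro t ht
      rw [interior_Ici] at ht
      exact ((hG t (le_of_lt ht)).differentiableAt).differentiableWithinAt
    · intro t ht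
      rw [interior_Ici] at ht
      rw [(hG t (le_of_lt ht)).deriv]
      have h1 := hle t (le_of_lt ht)
      have h2 : (0:ℝ) < Real.exp (-c * t) := Real.exp_pos _
      nlinarith
  intro t ht
  have hGt := hanti (Set.self_mem_Ici) (Set.mem_Ici.mpr ht) ht
  have this1 : f t * Real.exp (-c * t) ≤ f 0 := by
    have : G t ≤ G 0 := hGt
    simpa [hGdef] using this
  have h1 : Real.exp (-c * t) * Real.exp (c * t) = 1 := by
    rw [← Real.exp_add]; simp
  have h2 : (0:ℝ) < Real.exp (c * t) := Real.exp_pos _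
  have h3 : f t * Real.exp (-c * t) * Real.exp (c * t) = f t := by
    rw [mul_assoc, h1, mul_one]
  have h4 := mul_le_mul_of_nonneg_right this1 h2.le
  linarith

/-- Exponential estimates for the first variation of the flow of
`Y₁(x)ᵢ = αᵢ xᵢ + Z₁(x)ᵢ` when `‖DZ₁(x)‖ ≤ c₁`. -/
theorem stmt_5 (n : ℕ) (hn : 1 ≤ n) (a b : ℝ) (hab : a ≤ b)
    (α : Fin n → ℝ) (hα : ∀ i, a ≤ α i ∧ α i ≤ b)
    (c₁ : ℝ) (hc₁ : 0 < c₁)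
    (Z₁ : EuclideanSpace ℝ (Fin n) → EuclideanSpace ℝ (Fin n))
    (hZdiff : Differentiable ℝ Z₁)
    (hDZ : ∀ x : EuclideanSpace ℝ (Fin n), ‖fderiv ℝ Z₁ x‖ ≤ c₁)
    (a₁ b₁ : ℝ) (ha₁ : a₁ = a - c₁) (hb₁ : b₁ = b + c₁)
    (Y₁ : EuclideanSpace ℝ (Fin n) → EuclideanSpace ℝ (Fin n))
    (hY₁ : ∀ x i, Y₁ x i = α i * x i + Z₁ x i)
    (ψ : ℝ → EuclideanSpace ℝ (Fin n) → EuclideanSpace ℝ (Fin n))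
    (hψ0 : ∀ x, ψ 0 x = x)
    (hψ : ∀ t ≥ (0:ℝ), ∀ x, HasDerivAt (fun s => ψ s x) (Y₁ (ψ t x)) t)
    (x ν : EuclideanSpace ℝ (Fin n))
    (η : ℝ → EuclideanSpace ℝ (Fin n))
    (hη0 : η 0 = ν)
    (hη : ∀ t ≥ (0:ℝ), HasDerivAt η (fderiv ℝ Y₁ (ψ t x) (η t)) t) :
    ∀ t ≥ (0:ℝ), ‖ν‖ * Real.exp (a₁ * t) ≤ ‖η t‖ ∧ ‖η t‖ ≤ ‖ν‖ * Real.exp (b₁ * t) := by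
  classical
  -- The diagonal linear map
  set Ll : EuclideanSpace ℝ (Fin n) →ₗ[ℝ] EuclideanSpace ℝ (Fin n) :=
    { toFun := fun v => (WithLp.toLp 2 (fun i => α i * v i) : EuclideanSpace ℝ (Fin n))
      map_add' := by
        intro u v; ext i
        simp [PiLp.add_apply, mul_add]
      map_smul' := by
        intro c v; ext i
        simp [PiLp.smul_apply, smul_eq_mul]; ring } with hLl
  set L : EuclideanSpace ℝ (Fin n) →L[ℝ] EuclideanSpace ℝ (Fin n) :=
    LinearMap.toContinuousLinearMap Ll with hL
  have hLapp : ∀ (v : EuclideanSpace ℝ (Fin n)) i, L v i = α i * v i := by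
    intro v i; rfl
  have hYeq : Y₁ = fun y => L y + Z₁ y := by
    funext y; ext i
    simp [hY₁ y i, PiLp.add_apply, hLapp]
  have hDY : ∀ y, fderiv ℝ Y₁ y = L + fderiv ℝ Z₁ y := by
    intro y
    rw [hYeq]
    exact (L.hasFDerivAt.add (hZdiff y).hasFDerivAt).fderiv
  -- key inner-product estimates
  have key : ∀ y v, a₁ * ‖v‖^2 ≤ ⟪fderiv ℝ Y₁ y v, v⟫ ∧
      ⟪fderiv ℝ Y₁ y v, v⟫ ≤ b₁ * ‖v‖^2 := by
    intro y v
    rw [hDY y]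
    have hsplit : ⟪(L + fderiv ℝ Z₁ y) v, v⟫ = ⟪L v, v⟫ + ⟪fderiv ℝ Z₁ y v, v⟫ := by
      simp [ContinuousLinearMap.add_apply, inner_add_left]
    have hvv : ⟪v, v⟫ = ‖v‖^2 := real_inner_self_eq_norm_sq v
    have hvsum : ‖v‖^2 = ∑ i, v i * v i := by
      rw [← hvv]; simp only [PiLp.inner_apply, RCLike.inner_apply, conj_trivial]
    have hLsum : ⟪L v, v⟫ = ∑ i, α i * (v i * v i) := by
      simp [PiLp.inner_apply, RCLike.inner_apply, hLapp, mul_assoc]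
      exact Finset.sum_congr rfl fun i _ => by ring
    have hLlow : a * ‖v‖^2 ≤ ⟪L v, v⟫ := by
      rw [hLsum, hvsum, Finset.mul_sum]
      apply Finset.sum_le_sum
      intro i _
      have : (0:ℝ) ≤ v i * v i := mul_self_nonneg _
      exact mul_le_mul_of_nonneg_right (hα i).1 this
    have hLhigh : ⟪L v, v⟫ ≤ b * ‖v‖^2 := by
      rw [hLsum, hvsum, Finset.mul_sum]
      apply Finset.sum_le_sum
      intro i _
      have : (0:ℝ) ≤ v i * v i := mul_self_nonneg _
      exact mul_le_mul_of_nonneg_right (hα i).2 this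
    have hZbound : |⟪fderiv ℝ Z₁ y v, v⟫| ≤ c₁ * ‖v‖^2 := by
      calc |⟪fderiv ℝ Z₁ y v, v⟫| ≤ ‖fderiv ℝ Z₁ y v‖ * ‖v‖ :=
            abs_real_inner_le_norm _ _
        _ ≤ (c₁ * ‖v‖) * ‖v‖ := by
            apply mul_le_mul_of_nonneg_right _ (norm_nonneg v)
            calc ‖fderiv ℝ Z₁ y v‖ ≤ ‖fderiv ℝ Z₁ y‖ * ‖v‖ :=
                  (fderiv ℝ Z₁ y).le_opNorm v
              _ ≤ c₁ * ‖v‖ := mul_le_mul_of_nonneg_right (hDZ y) (norm_nonneg v)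
        _ = c₁ * ‖v‖^2 := by ring
    have h1 := abs_le.mp hZbound
    constructor
    · rw [hsplit, ha₁]; nlinarith [h1.1]
    · rw [hsplit, hb₁]; nlinarith [h1.2]
  -- F t = ‖η t‖²
  set F : ℝ → ℝ := fun t => ⟪η t, η t⟫ with hF
  set F' : ℝ → ℝ := fun t => 2 * ⟪fderiv ℝ Y₁ (ψ t x) (η t), η t⟫ with hF'
  have hFderiv : ∀ t ≥ (0:ℝ), HasDerivAt F (F' t) t := by
    intro t ht
    have h := (hη t ht).inner ℝ (hη t ht)
    have heq : F' t = ⟪η t, fderiv ℝ Y₁ (ψ t x) (η t)⟫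
        + ⟪fderiv ℝ Y₁ (ψ t x) (η t), η t⟫ := by
      show 2 * ⟪fderiv ℝ Y₁ (ψ t x) (η t), η t⟫ = _
      rw [real_inner_comm (η t)]; ring
    rw [heq]
    exact h
  have hF0 : F 0 = ‖ν‖^2 := by
    show (⟪η 0, η 0⟫ : ℝ) = ‖ν‖^2
    rw [hη0]; exact real_inner_self_eq_norm_sq ν
  have hFval : ∀ t, F t = ‖η t‖^2 := fun t => real_inner_self_eq_norm_sq _
  -- upper bound
  have hupper : ∀ t ≥ (0:ℝ), F t ≤ F 0 * Real.exp ((2 * b₁) * t) := by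
    apply stmt5_gronwall F F' (2 * b₁) hFderiv
    intro t ht
    have hk := (key (ψ t x) (η t)).2
    show 2 * ⟪fderiv ℝ Y₁ (ψ t x) (η t), η t⟫ ≤ 2 * b₁ * F t
    rw [hFval t]; linarith
  have hlower : ∀ t ≥ (0:ℝ), F 0 * Real.exp ((2 * a₁) * t) ≤ F t := by
    have := stmt5_gronwall (fun t => -F t) (fun t => -F' t) (2 * a₁)
      (fun t ht => (hFderiv t ht).neg)
      (by
        intro t ht
        have hk := (key (ψ t x) (η t)).1
        show -(2 * ⟪fderiv ℝ Y₁ (ψ t x) (η t), η t⟫) ≤ 2 * a₁ * (-(F t))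
        rw [hFval t]; linarith)
    intro t ht
    have h : -F t ≤ -F 0 * Real.exp (2 * a₁ * t) := this t ht
    linarith
  intro t ht
  have hexp2 : ∀ c : ℝ, Real.exp ((2 * c) * t) = (Real.exp (c * t))^2 := by
    intro c
    rw [sq, ← Real.exp_add]; ring_nf
  have hu := hupper t ht
  have hl := hlower t ht
  rw [hF0, hFval t, hexp2] at hu hl
  constructor
  · have h1 : (‖ν‖ * Real.exp (a₁ * t))^2 ≤ ‖η t‖^2 := by
      rw [mul_pow]; exact hl
    calc ‖ν‖ * Real.exp (a₁ * t)
        = Real.sqrt ((‖ν‖ * Real.exp (a₁ * t))^2) :=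
          (Real.sqrt_sq (mul_nonneg (norm_nonneg _) (Real.exp_pos _).le)).symm
      _ ≤ Real.sqrt (‖η t‖^2) := Real.sqrt_le_sqrt h1
      _ = ‖η t‖ := Real.sqrt_sq (norm_nonneg _)
  · have h1 : ‖η t‖^2 ≤ (‖ν‖ * Real.exp (b₁ * t))^2 := by
      rw [mul_pow]; exact hu
    calc ‖η t‖ = Real.sqrt (‖η t‖^2) := (Real.sqrt_sq (norm_nonneg _)).symm
      _ ≤ Real.sqrt ((‖ν‖ * Real.exp (b₁ * t))^2) := Real.sqrt_le_sqrt h1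
      _ = ‖ν‖ * Real.exp (b₁ * t) :=
          Real.sqrt_sq (mul_nonneg (norm_nonneg _) (Real.exp_pos _).le)
end

section
/- Let a ≤ b be reals, α : Fin n → ℝ with a ≤ αᵢ ≤ b for all i, and let Z₁ : ℝⁿ → ℝⁿ be differentiable satisfying, for some integer m ≥ 1 and constants c_l′, c_l″ > 0 (l = 0, 1): ‖D^l Z₁(x)‖ ≤ c_l′‖x‖^{1−l+m} for all x with ‖x‖ ≤ 1, and ‖D^l Z₁(x)‖ ≤ c_l″‖x‖^{1−l} for all x with ‖x‖ ≥ 1 (here D⁰Z₁ = Z₁ and D¹Z₁ = DZ₁ with operator norm). Set c₁ = max(c₁′, c₁″), a₁ = a − c₁, b₁ = b + c₁. Let Y₁(x)ᵢ = αᵢ xᵢ + Z₁(x)ᵢ, let ψ be a forward flow of Y₁, and let η be a first variation of ψ at x ∈ ℝⁿ with initial vector ν ∈ ℝⁿ. Then for all t ≥ 0: ‖ν‖e^{a₁ t} ≤ ‖η t‖ ≤ ‖ν‖e^{b₁ t}. -/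
open scoped RealInnerProductSpace

/-- Exponential estimates for the first variation of the flow of
`Y₁(x)ᵢ = αᵢ xᵢ + Z₁(x)ᵢ` under power-type bounds on `Z₁` and `DZ₁`. -/
theorem stmt_6 (n : ℕ) (hn : 1 ≤ n) (a b : ℝ) (hab : a ≤ b)
    (α : Fin n → ℝ) (hα : ∀ i, a ≤ α i ∧ α i ≤ b)
    (m : ℕ) (hm : 1 ≤ m)
    (c₀' c₀'' c₁' c₁'' : ℝ) (hc₀' : 0 < c₀') (hc₀'' : 0 < c₀'')
    (hc₁' : 0 < c₁') (hc₁'' : 0 < c₁'')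
    (Z₁ : EuclideanSpace ℝ (Fin n) → EuclideanSpace ℝ (Fin n))
    (hZdiff : Differentiable ℝ Z₁)
    (hZ0in : ∀ x : EuclideanSpace ℝ (Fin n), ‖x‖ ≤ 1 → ‖Z₁ x‖ ≤ c₀' * ‖x‖ ^ (1 + m))
    (hZ0out : ∀ x : EuclideanSpace ℝ (Fin n), 1 ≤ ‖x‖ → ‖Z₁ x‖ ≤ c₀'' * ‖x‖)
    (hZ1in : ∀ x : EuclideanSpace ℝ (Fin n), ‖x‖ ≤ 1 → ‖fderiv ℝ Z₁ x‖ ≤ c₁' * ‖x‖ ^ m)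
    (hZ1out : ∀ x : EuclideanSpace ℝ (Fin n), 1 ≤ ‖x‖ → ‖fderiv ℝ Z₁ x‖ ≤ c₁'')
    (c₁ a₁ b₁ : ℝ) (hc₁ : c₁ = max c₁' c₁'') (ha₁ : a₁ = a - c₁) (hb₁ : b₁ = b + c₁)
    (Y₁ : EuclideanSpace ℝ (Fin n) → EuclideanSpace ℝ (Fin n))
    (hY₁ : ∀ x i, Y₁ x i = α i * x i + Z₁ x i)
    (ψ : ℝ → EuclideanSpace ℝ (Fin n) → EuclideanSpace ℝ (Fin n))
    (hψ0 : ∀ x, ψ 0 x = x)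
    (hψ : ∀ t ≥ (0:ℝ), ∀ x, HasDerivAt (fun s => ψ s x) (Y₁ (ψ t x)) t)
    (x ν : EuclideanSpace ℝ (Fin n))
    (η : ℝ → EuclideanSpace ℝ (Fin n))
    (hη0 : η 0 = ν)
    (hη : ∀ t ≥ (0:ℝ), HasDerivAt η (fderiv ℝ Y₁ (ψ t x) (η t)) t) :
    ∀ t ≥ (0:ℝ), ‖ν‖ * Real.exp (a₁ * t) ≤ ‖η t‖ ∧ ‖η t‖ ≤ ‖ν‖ * Real.exp (b₁ * t) := by
  -- the linear part as a continuous linear map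
  let Lm : EuclideanSpace ℝ (Fin n) →ₗ[ℝ] EuclideanSpace ℝ (Fin n) :=
    { toFun := fun x => WithLp.toLp 2 (fun i => α i * x i)
      map_add' := by intro x y; ext i; simp [mul_add]
      map_smul' := by intro c x; ext i; simp [PiLp.smul_apply, smul_eq_mul]; ring }
  let L := Lm.toContinuousLinearMap
  have hYeq : Y₁ = fun y => L y + Z₁ y := by
    funext y; ext i
    have : (L y + Z₁ y) i = α i * y i + Z₁ y i := rfl
    rw [this, hY₁]
  have hfd : ∀ y, fderiv ℝ Y₁ y = L + fderiv ℝ Z₁ y := by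
    intro y
    rw [hYeq]
    exact (L.hasFDerivAt.add (hZdiff y).hasFDerivAt).fderiv
  -- global bound on the derivative of Z₁
  have hDZ : ∀ y, ‖fderiv ℝ Z₁ y‖ ≤ c₁ := by
    intro y
    rcases le_or_gt ‖y‖ 1 with h | h
    · calc ‖fderiv ℝ Z₁ y‖ ≤ c₁' * ‖y‖ ^ m := hZ1in y h
        _ ≤ c₁' * 1 := by
            have := pow_le_one₀ (norm_nonneg y) h (n := m)
            nlinarith
        _ ≤ c₁ := by rw [mul_one, hc₁]; exact le_max_left _ _
    · exact (hZ1out y h.le).trans (hc₁ ▸ le_max_right _ _)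
  -- norm squared as a sum
  have hnorm_sq : ∀ v : EuclideanSpace ℝ (Fin n), ‖v‖^2 = ∑ i, (v i)^2 := by
    intro v
    rw [← real_inner_self_eq_norm_sq]
    simp [PiLp.inner_apply, RCLike.inner_apply]
    rw [EuclideanSpace.norm_sq_eq]; simp
  have hL : ∀ v : EuclideanSpace ℝ (Fin n), ⟪v, L v⟫ = ∑ i, α i * (v i)^2 := by
    intro v
    simp [PiLp.inner_apply, RCLike.inner_apply, L, Lm]
    exact Finset.sum_congr rfl fun i _ => by ring
  -- two-sided inner product bound for the full derivative
  have hinner : ∀ y v : EuclideanSpace ℝ (Fin n),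
      a₁ * ‖v‖^2 ≤ ⟪v, fderiv ℝ Y₁ y v⟫ ∧ ⟪v, fderiv ℝ Y₁ y v⟫ ≤ b₁ * ‖v‖^2 := by
    intro y v
    have hsplit : ⟪v, fderiv ℝ Y₁ y v⟫ = ⟪v, L v⟫ + ⟪v, fderiv ℝ Z₁ y v⟫ := by
      rw [hfd y, ContinuousLinearMap.add_apply, inner_add_right]
    have hsum_le : ⟪v, L v⟫ ≤ b * ‖v‖^2 := by
      rw [hL, hnorm_sq, Finset.mul_sum]
      exact Finset.sum_le_sum fun i _ => mul_le_mul_of_nonneg_right (hα i).2 (sq_nonneg _)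
    have hsum_ge : a * ‖v‖^2 ≤ ⟪v, L v⟫ := by
      rw [hL, hnorm_sq, Finset.mul_sum]
      exact Finset.sum_le_sum fun i _ => mul_le_mul_of_nonneg_right (hα i).1 (sq_nonneg _)
    have habs : |⟪v, fderiv ℝ Z₁ y v⟫| ≤ c₁ * ‖v‖^2 := by
      calc |⟪v, fderiv ℝ Z₁ y v⟫| ≤ ‖v‖ * ‖fderiv ℝ Z₁ y v‖ := abs_real_inner_le_norm _ _
        _ ≤ ‖v‖ * (c₁ * ‖v‖) := by
            refine mul_le_mul_of_nonneg_left ?_ (norm_nonneg v)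
            exact ((fderiv ℝ Z₁ y).le_opNorm v).trans
              (mul_le_mul_of_nonneg_right (hDZ y) (norm_nonneg v))
        _ = c₁ * ‖v‖^2 := by ring
    rw [hsplit]
    constructor
    · have h1 : -(c₁ * ‖v‖^2) ≤ ⟪v, fderiv ℝ Z₁ y v⟫ := neg_le_of_abs_le habs
      rw [ha₁]; nlinarith
    · have h2 : ⟪v, fderiv ℝ Z₁ y v⟫ ≤ c₁ * ‖v‖^2 := le_of_abs_le habs
      rw [hb₁]; nlinarith
  -- the squared norm of η and its derivative
  set g : ℝ → ℝ := fun s => ‖η s‖^2 with hgdef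
  have hg : ∀ s ≥ (0:ℝ), HasDerivAt g (2 * ⟪η s, fderiv ℝ Y₁ (ψ s x) (η s)⟫) s := by
    intro s hs
    have hd := (hη s hs).inner (𝕜 := ℝ) (hη s hs)
    have h2 : (fun t => ⟪η t, η t⟫) = g := funext fun t => real_inner_self_eq_norm_sq _
    rw [h2] at hd
    refine hd.congr_deriv ?_
    rw [real_inner_comm (fderiv ℝ Y₁ (ψ s x) (η s)) (η s)]
    ring
  have hg0 : g 0 = ‖ν‖^2 := by simp [g, hη0]
  have hgnn : ∀ s, 0 ≤ g s := fun s => sq_nonneg _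
  -- derivative of the weighted function
  have hd : ∀ (c : ℝ) (s : ℝ), 0 ≤ s → HasDerivAt (fun s => g s * Real.exp (c*s))
      (2 * ⟪η s, fderiv ℝ Y₁ (ψ s x) (η s)⟫ * Real.exp (c*s) + g s * (Real.exp (c*s) * c)) s := by
    intro c s hs
    have he : HasDerivAt (fun s => Real.exp (c*s)) (Real.exp (c*s) * c) s := by
      simpa using ((hasDerivAt_id s).const_mul c).exp
    exact (hg s hs).mul he
  have hcontg : ∀ (c : ℝ), ContinuousOn (fun s => g s * Real.exp (c*s)) (Set.Ici 0) := by
    intro c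
    refine ContinuousOn.mul (fun s hs => ((hg s hs).continuousAt).continuousWithinAt) ?_
    exact (Real.continuous_exp.comp (continuous_const.mul continuous_id)).continuousOn
  intro t ht
  have hmemt : t ∈ Set.Ici (0:ℝ) := ht
  have hmem0 : (0:ℝ) ∈ Set.Ici (0:ℝ) := Set.self_mem_Ici
  constructor
  · -- lower bound
    have key : MonotoneOn (fun s => g s * Real.exp (-(2*a₁)*s)) (Set.Ici 0) := by
      apply monotoneOn_of_deriv_nonneg (convex_Ici 0) (hcontg _)
      · rw [interior_Ici]
        exact fun s hs => (hd _ s (le_of_lt hs)).differentiableAt.differentiableWithinAt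
      · rw [interior_Ici]
        intro s hs
        rw [(hd _ s (le_of_lt hs)).deriv]
        have hlow := (hinner (ψ s x) (η s)).1
        have hE : (0:ℝ) < Real.exp (-(2*a₁)*s) := Real.exp_pos _
        have hgs : ‖η s‖^2 = g s := rfl
        rw [hgs] at hlow
        nlinarith
    have h1 : g 0 * Real.exp (-(2*a₁)*0) ≤ g t * Real.exp (-(2*a₁)*t) := key hmem0 hmemt ht
    rw [hg0] at h1
    simp only [mul_zero, Real.exp_zero, mul_one] at h1
    have hE : Real.exp (-(2*a₁)*t) * Real.exp (2*a₁*t) = 1 := by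
      rw [← Real.exp_add]; ring_nf; exact Real.exp_zero
    have h2 : ‖ν‖^2 * Real.exp (2*a₁*t) ≤ g t := by
      calc ‖ν‖^2 * Real.exp (2*a₁*t)
          ≤ g t * Real.exp (-(2*a₁)*t) * Real.exp (2*a₁*t) :=
            mul_le_mul_of_nonneg_right h1 (Real.exp_pos _).le
        _ = g t := by rw [mul_assoc, hE, mul_one]
    have hsq : (‖ν‖ * Real.exp (a₁*t))^2 = ‖ν‖^2 * Real.exp (2*a₁*t) := by
      rw [mul_pow, sq (Real.exp _), ← Real.exp_add]; ring_nf
    rw [← hsq] at h2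
    have := Real.sqrt_le_sqrt h2
    rwa [Real.sqrt_sq (by positivity), Real.sqrt_sq (norm_nonneg _)] at this
  · -- upper bound
    have key : AntitoneOn (fun s => g s * Real.exp (-(2*b₁)*s)) (Set.Ici 0) := by
      apply antitoneOn_of_deriv_nonpos (convex_Ici 0) (hcontg _)
      · rw [interior_Ici]
        exact fun s hs => (hd _ s (le_of_lt hs)).differentiableAt.differentiableWithinAt
      · rw [interior_Ici]
        intro s hs
        rw [(hd _ s (le_of_lt hs)).deriv]
        have hup := (hinner (ψ s x) (η s)).2
        have hE : (0:ℝ) < Real.exp (-(2*b₁)*s) := Real.exp_pos _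
        have hgs : ‖η s‖^2 = g s := rfl
        rw [hgs] at hup
        nlinarith
    have h1 : g t * Real.exp (-(2*b₁)*t) ≤ g 0 * Real.exp (-(2*b₁)*0) := key hmem0 hmemt ht
    rw [hg0] at h1
    simp only [mul_zero, Real.exp_zero, mul_one] at h1
    have hE : Real.exp (-(2*b₁)*t) * Real.exp (2*b₁*t) = 1 := by
      rw [← Real.exp_add]; ring_nf; exact Real.exp_zero
    have h2 : g t ≤ ‖ν‖^2 * Real.exp (2*b₁*t) := by
      calc g t = g t * Real.exp (-(2*b₁)*t) * Real.exp (2*b₁*t) := by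
            rw [mul_assoc, hE, mul_one]
        _ ≤ ‖ν‖^2 * Real.exp (2*b₁*t) :=
            mul_le_mul_of_nonneg_right h1 (Real.exp_pos _).le
    have hsq : (‖ν‖ * Real.exp (b₁*t))^2 = ‖ν‖^2 * Real.exp (2*b₁*t) := by
      rw [mul_pow, sq (Real.exp _), ← Real.exp_add]; ring_nf
    rw [← hsq] at h2
    have := Real.sqrt_le_sqrt h2
    rwa [Real.sqrt_sq (norm_nonneg _), Real.sqrt_sq (by positivity)] at this
end

section
/- Let β : Fin n → ℝ with βᵢ ≤ 0 for all i, and let each mᵢ be an even positive integer. Define φ : ℝ → ℝⁿ → ℝⁿ coordinatewise by (φ t x)ᵢ = xᵢ (1 − mᵢ βᵢ t xᵢ^{mᵢ})^{−1/mᵢ}. Then φ is a forward flow of the vector field X₂(x)ᵢ = βᵢ xᵢ^{1+mᵢ}: φ 0 x = x for all x ∈ ℝⁿ, and for all t ≥ 0 and all x, (d/ds)(φ s x)ᵢ at s = t equals βᵢ (φ t x)ᵢ^{1+mᵢ}. -/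
/-- The explicit formula `(φ t x)ᵢ = xᵢ (1 − mᵢ βᵢ t xᵢ^{mᵢ})^{−1/mᵢ}`
defines a forward flow of the monomial vector field `X₂(x)ᵢ = βᵢ xᵢ^{1+mᵢ}`. -/
theorem stmt_8 (n : ℕ) (hn : 1 ≤ n)
    (β : Fin n → ℝ) (hβ : ∀ i, β i ≤ 0)
    (m : Fin n → ℕ) (hme : ∀ i, Even (m i)) (hmp : ∀ i, 0 < m i)
    (φ : ℝ → EuclideanSpace ℝ (Fin n) → EuclideanSpace ℝ (Fin n))
    (hφ : ∀ t x i, φ t x i =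
      x i * (1 - (m i : ℝ) * β i * t * x i ^ m i) ^ (-(1:ℝ) / m i)) :
    (∀ x : EuclideanSpace ℝ (Fin n), φ 0 x = x) ∧
    (∀ t ≥ (0:ℝ), ∀ x : EuclideanSpace ℝ (Fin n), ∀ i : Fin n,
      HasDerivAt (fun s => φ s x i) (β i * φ t x i ^ (1 + m i)) t) := by
  constructor
  · intro x
    ext i
    rw [hφ]
    simp
  · intro t ht x i
    have hm0 : (m i : ℝ) ≠ 0 := Nat.cast_ne_zero.mpr (hmp i).ne'
    set a : ℝ := (m i : ℝ) * β i * x i ^ m i with ha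
    have ha0 : a ≤ 0 := by
      have hx : (0:ℝ) ≤ x i ^ m i := (hme i).pow_nonneg _
      have : (m i : ℝ) * β i ≤ 0 :=
        mul_nonpos_of_nonneg_of_nonpos (Nat.cast_nonneg _) (hβ i)
      exact mul_nonpos_of_nonpos_of_nonneg this hx
    have hgt : (0:ℝ) < 1 - a * t := by
      nlinarith
    set p : ℝ := -(1:ℝ) / m i with hp
    have hg : HasDerivAt (fun s : ℝ => 1 - a * s) (-a) t := by
      simpa using ((hasDerivAt_id t).const_mul a).const_sub 1
    have hpow : HasDerivAt (fun s : ℝ => (1 - a * s) ^ p)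
        (p * (1 - a * t) ^ (p - 1) * (-a)) t := by
      have := hg.rpow_const (p := p) (Or.inl hgt.ne')
      convert this using 1
      ring
    have key : HasDerivAt (fun s => φ s x i)
        (x i * (p * (1 - a * t) ^ (p - 1) * (-a))) t := by
      have := hpow.const_mul (x i)
      refine HasDerivAt.congr_deriv (this.congr_of_eventuallyEq ?_) (by ring)
      filter_upwards with s
      rw [hφ]
      rw [ha, hp]
      ring_nf
    convert key using 1
    rw [hφ]
    have hexp : ((1 - (m i : ℝ) * β i * t * x i ^ m i) ^ p) ^ (1 + m i)
        = (1 - a * t) ^ (p - 1) := by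
      have hb : (1:ℝ) - (m i : ℝ) * β i * t * x i ^ m i = 1 - a * t := by ring
      rw [hb, ← Real.rpow_natCast ((1 - a * t) ^ p) (1 + m i),
        ← Real.rpow_mul hgt.le]
      congr 1
      push_cast
      rw [hp]
      field_simp
      ring
    rw [mul_pow, hexp]
    rw [ha, hp]
    field_simp
    ring
end

section
/- Let 0 < b ≤ a and α : Fin n → ℝ with −a ≤ αᵢ ≤ −b for all i; let 0 < b′ ≤ a′ and β : Fin n → ℝ with −a′ ≤ βᵢ ≤ −b′; let the mᵢ be even positive integers with 0 < m₀ ≤ mᵢ ≤ m₀′. Let Z₃ : ℝⁿ → ℝⁿ be continuous with components Z₃ᵢ satisfying, for constants c₀′, c₀″ > 0: |Z₃ᵢ(x)| ≤ c₀′|xᵢ|^{2+mᵢ} for ‖x‖ ≤ 1 and |Z₃ᵢ(x)| ≤ c₀″|xᵢ|^{1+mᵢ} for ‖x‖ ≥ 1; set c₀ = max(c₀′, c₀″) and assume b₀ = b′ − c₀ > 0. Let ψ be a forward flow of Y₃(x)ᵢ = αᵢ xᵢ + βᵢ xᵢ^{1+mᵢ} + Z₃ᵢ(x). Then for every ρ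 > 0 there exist constants c₁, c₂ > 0 such that for all x with ‖x‖ < ρ and all t ≥ 0: c₁‖x‖e^{−a t} ≤ ‖ψ t x‖ ≤ c₂‖x‖e^{−b t}. -/
open Real Set

set_option maxHeartbeats 1000000

lemma aux_mono_stmt13 (f g : ℝ → ℝ)
    (hf : ∀ t ∈ Ici (0:ℝ), HasDerivAt f (g t) t)
    (hg : ∀ t ∈ Ici (0:ℝ), 0 ≤ g t) : MonotoneOn f (Ici 0) := by
  apply monotoneOn_of_deriv_nonneg (convex_Ici 0)
  · exact fun t ht => (hf t ht).continuousAt.continuousWithinAt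
  · intro t ht
    rw [interior_Ici] at ht
    exact ((hf t (Ioi_subset_Ici_self ht)).differentiableAt).differentiableWithinAt
  · intro t ht
    rw [interior_Ici] at ht
    rw [(hf t (Ioi_subset_Ici_self ht)).deriv]
    exact hg t (Ioi_subset_Ici_self ht)

/-- Exponential two-sided estimates for the forward flow of the
perturbed binomial vector field `Y₃(x)ᵢ = αᵢ xᵢ + βᵢ xᵢ^{1+mᵢ} + Z₃ᵢ(x)`. -/
theorem stmt_13 (n : ℕ) (hn : 1 ≤ n) (a b : ℝ) (hb : 0 < b) (hab : b ≤ a)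
    (α : Fin n → ℝ) (hα : ∀ i, -a ≤ α i ∧ α i ≤ -b)
    (a' b' : ℝ) (hb' : 0 < b') (hab' : b' ≤ a')
    (β : Fin n → ℝ) (hβ : ∀ i, -a' ≤ β i ∧ β i ≤ -b')
    (m : Fin n → ℕ) (hme : ∀ i, Even (m i)) (hmp : ∀ i, 0 < m i)
    (m₀ m₀' : ℕ) (hm₀ : 0 < m₀) (hm : ∀ i, m₀ ≤ m i ∧ m i ≤ m₀')
    (c₀' c₀'' : ℝ) (hc₀' : 0 < c₀') (hc₀'' : 0 < c₀'')
    (Z₃ : EuclideanSpace ℝ (Fin n) → EuclideanSpace ℝ (Fin n))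
    (hZcont : Continuous Z₃)
    (hZin : ∀ x : EuclideanSpace ℝ (Fin n), ‖x‖ ≤ 1 →
      ∀ i, |Z₃ x i| ≤ c₀' * |x i| ^ (2 + m i))
    (hZout : ∀ x : EuclideanSpace ℝ (Fin n), 1 ≤ ‖x‖ →
      ∀ i, |Z₃ x i| ≤ c₀'' * |x i| ^ (1 + m i))
    (c₀ b₀ : ℝ) (hc₀ : c₀ = max c₀' c₀'') (hb₀ : b₀ = b' - c₀) (hb₀pos : 0 < b₀)
    (Y₃ : EuclideanSpace ℝ (Fin n) → EuclideanSpace ℝ (Fin n))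
    (hY₃ : ∀ x i, Y₃ x i = α i * x i + β i * x i ^ (1 + m i) + Z₃ x i)
    (ψ : ℝ → EuclideanSpace ℝ (Fin n) → EuclideanSpace ℝ (Fin n))
    (hψ0 : ∀ x, ψ 0 x = x)
    (hψ : ∀ t ≥ (0:ℝ), ∀ x, HasDerivAt (fun s => ψ s x) (Y₃ (ψ t x)) t) :
    ∀ ρ > (0:ℝ), ∃ c₁ > (0:ℝ), ∃ c₂ > (0:ℝ),
      ∀ x : EuclideanSpace ℝ (Fin n), ‖x‖ < ρ → ∀ t ≥ (0:ℝ),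
        c₁ * ‖x‖ * Real.exp (-a * t) ≤ ‖ψ t x‖ ∧
        ‖ψ t x‖ ≤ c₂ * ‖x‖ * Real.exp (-b * t) := by
  -- basic positivity facts
  have hc₀pos : 0 < c₀ := by rw [hc₀]; exact lt_max_of_lt_left hc₀'
  have ha'pos : 0 < a' := lt_of_lt_of_le hb' hab'
  have hApos : 0 < a' + c₀ := by positivity
  -- coordinates are bounded by the norm
  have habs : ∀ (y : EuclideanSpace ℝ (Fin n)) (i : Fin n), |y i| ≤ ‖y‖ := by
    intro y i
    rw [EuclideanSpace.norm_eq, show |y i| = Real.sqrt (|y i| ^ 2) by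
      rw [Real.sqrt_sq_eq_abs, abs_abs]]
    apply Real.sqrt_le_sqrt
    have := Finset.single_le_sum (f := fun j => ‖y j‖ ^ 2)
      (fun j _ => by positivity) (Finset.mem_univ i)
    simpa using this
  -- uniform bound on the perturbation term
  have hZ : ∀ (y : EuclideanSpace ℝ (Fin n)) (i : Fin n),
      |y i * Z₃ y i| ≤ c₀ * |y i| ^ (2 + m i) := by
    intro y i
    rw [abs_mul]
    rcases le_total ‖y‖ 1 with h1 | h1
    · have h2 := hZin y h1 i
      have h3 : |y i| ≤ 1 := (habs y i).trans h1
      have h5 : c₀' ≤ c₀ := by rw [hc₀]; exact le_max_left _ _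
      calc |y i| * |Z₃ y i| ≤ 1 * (c₀' * |y i| ^ (2 + m i)) :=
            mul_le_mul h3 h2 (abs_nonneg _) zero_le_one
        _ ≤ c₀ * |y i| ^ (2 + m i) := by
            rw [one_mul]; exact mul_le_mul_of_nonneg_right h5 (by positivity)
    · have h2 := hZout y h1 i
      have h5 : c₀'' ≤ c₀ := by rw [hc₀]; exact le_max_right _ _
      calc |y i| * |Z₃ y i| ≤ |y i| * (c₀'' * |y i| ^ (1 + m i)) :=
            mul_le_mul_of_nonneg_left h2 (abs_nonneg _)
        _ = c₀'' * |y i| ^ (2 + m i) := by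
            rw [show 2 + m i = (1 + m i) + 1 from by ring, pow_succ]; ring
        _ ≤ c₀ * |y i| ^ (2 + m i) := mul_le_mul_of_nonneg_right h5 (by positivity)
  -- even powers
  have hevpow : ∀ (y : EuclideanSpace ℝ (Fin n)) (i : Fin n),
      (y i) ^ (2 + m i) = |y i| ^ (2 + m i) := by
    intro y i
    exact (Even.pow_abs (Even.add even_two (hme i)) _).symm
  have hterm : ∀ (y : EuclideanSpace ℝ (Fin n)) (i : Fin n),
      y i * Y₃ y i = α i * (y i) ^ 2 + β i * (y i) ^ (2 + m i) + y i * Z₃ y i := by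
    intro y i
    rw [hY₃, show 2 + m i = (1 + m i) + 1 from by ring, pow_succ]
    ring
  -- pointwise upper bound
  have hA : ∀ (y : EuclideanSpace ℝ (Fin n)) (i : Fin n),
      y i * Y₃ y i ≤ -b * (y i) ^ 2 := by
    intro y i
    rw [hterm y i, hevpow y i]
    have hz := hZ y i
    have h1 : α i ≤ -b := (hα i).2
    have h2 : β i ≤ -b' := (hβ i).2
    have hE : (0:ℝ) ≤ |y i| ^ (2 + m i) := by positivity
    have hy2 : (0:ℝ) ≤ (y i) ^ 2 := sq_nonneg _
    have h3 : α i * (y i) ^ 2 ≤ -b * (y i) ^ 2 := mul_le_mul_of_nonneg_right h1 hy2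
    have h4 : β i * |y i| ^ (2 + m i) ≤ -b' * |y i| ^ (2 + m i) :=
      mul_le_mul_of_nonneg_right h2 hE
    have h5 : y i * Z₃ y i ≤ c₀ * |y i| ^ (2 + m i) := (le_abs_self _).trans hz
    have h6 : -b' * |y i| ^ (2 + m i) + c₀ * |y i| ^ (2 + m i) ≤ 0 := by
      have hcb : -b' + c₀ ≤ 0 := by rw [hb₀] at hb₀pos; linarith
      nlinarith [hE]
    linarith
  -- pointwise lower bound
  have hB : ∀ (y : EuclideanSpace ℝ (Fin n)) (i : Fin n),
      -a * (y i) ^ 2 - (a' + c₀) * ((y i) ^ 2 * |y i| ^ (m i)) ≤ y i * Y₃ y i := by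
    intro y i
    rw [hterm y i, hevpow y i]
    have hEeq : |y i| ^ (2 + m i) = (y i) ^ 2 * |y i| ^ (m i) := by
      rw [pow_add, sq_abs]
    rw [hEeq]
    have hz := hZ y i
    rw [abs_mul, hEeq] at hz
    have h1 : -a ≤ α i := (hα i).1
    have h2 : -a' ≤ β i := (hβ i).1
    have hE : (0:ℝ) ≤ (y i) ^ 2 * |y i| ^ (m i) := by positivity
    have hy2 : (0:ℝ) ≤ (y i) ^ 2 := sq_nonneg _
    have h3 : -a * (y i) ^ 2 ≤ α i * (y i) ^ 2 := mul_le_mul_of_nonneg_right h1 hy2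
    have h4 : -a' * ((y i) ^ 2 * |y i| ^ (m i)) ≤ β i * ((y i) ^ 2 * |y i| ^ (m i)) :=
      mul_le_mul_of_nonneg_right h2 hE
    have h5 : -(c₀ * ((y i) ^ 2 * |y i| ^ (m i))) ≤ y i * Z₃ y i := by
      have := neg_abs_le (y i * Z₃ y i)
      have h' : |y i * Z₃ y i| ≤ c₀ * ((y i) ^ 2 * |y i| ^ (m i)) := by
        calc |y i * Z₃ y i| = |y i| * |Z₃ y i| := abs_mul _ _
          _ ≤ c₀ * ((y i) ^ 2 * |y i| ^ (m i)) := hz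
      linarith
    linarith
  -- now fix ρ
  intro ρ hρ
  set C : ℝ := (max 1 ρ) ^ m₀' with hCdef
  have hC1 : (1:ℝ) ≤ C := by
    simpa using pow_le_pow_left₀ zero_le_one (le_max_left 1 ρ) m₀'
  have hCpos : (0:ℝ) < C := lt_of_lt_of_le one_pos hC1
  set k : ℝ := b * (m₀ : ℝ) with hkdef
  have hkpos : (0:ℝ) < k := by
    have : (0:ℝ) < (m₀ : ℝ) := by exact_mod_cast hm₀
    positivity
  set D : ℝ := 2 * (a' + c₀) * C / k with hDdef
  have hDpos : (0:ℝ) < D := by positivity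
  have hDk : D * k = 2 * (a' + c₀) * C := by
    rw [hDdef]; field_simp
  refine ⟨Real.exp (-(D / 2)), Real.exp_pos _, 1, one_pos, ?_⟩
  intro x hx t ht
  -- the squared norm along the flow
  set R : ℝ → ℝ := fun s => (inner ℝ (ψ s x) (ψ s x) : ℝ) with hRdef
  have hRnorm : ∀ s, R s = ‖ψ s x‖ ^ 2 := fun s => real_inner_self_eq_norm_sq _
  have hRpos : ∀ s, 0 ≤ R s := fun s => by rw [hRnorm]; positivity
  have hRsum : ∀ s, R s = ∑ i, (ψ s x i) ^ 2 := by
    intro s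
    rw [hRdef]
    simp only [PiLp.inner_apply, RCLike.inner_apply, conj_trivial, sq]
  have hR0 : R 0 = ‖x‖ ^ 2 := by rw [hRnorm, hψ0]
  have hRd : ∀ s ∈ Ici (0:ℝ), HasDerivAt R (2 * ∑ i, ψ s x i * Y₃ (ψ s x) i) s := by
    intro s hs
    have h := (hψ s hs x).inner ℝ (hψ s hs x)
    refine h.congr_deriv (Eq.symm ?_)
    rw [real_inner_comm (ψ s x) (Y₃ (ψ s x)), ← two_mul]
    congr 1
    simp only [PiLp.inner_apply, RCLike.inner_apply, conj_trivial, mul_comm]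
  -- the key upper differential inequality
  have hSle : ∀ s, (∑ i, ψ s x i * Y₃ (ψ s x) i) ≤ -b * R s := by
    intro s
    rw [hRsum s, Finset.mul_sum]
    exact Finset.sum_le_sum fun i _ => hA (ψ s x) i
  -- exponential factor derivative
  have hexp : ∀ (c : ℝ) (s : ℝ),
      HasDerivAt (fun u => Real.exp (c * u)) (Real.exp (c * s) * c) s := by
    intro c s
    have := ((hasDerivAt_id s).const_mul c).exp
    simpa using this
  -- upper Gronwall: R s * exp (2 b s) is nonincreasing
  have hup : ∀ s ∈ Ici (0:ℝ), R s * Real.exp (2 * b * s) ≤ ‖x‖ ^ 2 := by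
    have hmono := aux_mono_stmt13 (fun s => -(R s * Real.exp (2 * b * s)))
      (fun s => -((2 * ∑ i, ψ s x i * Y₃ (ψ s x) i) * Real.exp (2 * b * s)
        + R s * (Real.exp (2 * b * s) * (2 * b))))
      (by
        intro s hs
        exact (((hRd s hs).mul (hexp (2 * b) s))).neg)
      (by
        intro s hs
        have h1 := hSle s
        have h2 := Real.exp_pos (2 * b * s)
        have h3 := mul_le_mul_of_nonneg_right h1 h2.le
        dsimp only
        nlinarith [hRpos s, h3, hb.le])
    intro s hs
    have := hmono (self_mem_Ici) hs hs
    simp only [neg_le_neg_iff] at this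
    calc R s * Real.exp (2 * b * s) ≤ R 0 * Real.exp (2 * b * 0) := by linarith
      _ = ‖x‖ ^ 2 := by rw [hR0]; norm_num
  -- norm upper bound along the flow
  have hupn : ∀ s ∈ Ici (0:ℝ), ‖ψ s x‖ ≤ ‖x‖ * Real.exp (-b * s) := by
    intro s hs
    have hee : Real.exp (b * s) ^ 2 = Real.exp (2 * b * s) := by
      rw [sq, ← Real.exp_add]; ring_nf
    have h2 : (‖ψ s x‖ * Real.exp (b * s)) ^ 2 ≤ ‖x‖ ^ 2 := by
      rw [mul_pow, hee, ← hRnorm s]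
      exact hup s hs
    have h3 : ‖ψ s x‖ * Real.exp (b * s) ≤ ‖x‖ := by
      nlinarith [norm_nonneg (ψ s x), Real.exp_pos (b * s), norm_nonneg x]
    have h4 := mul_le_mul_of_nonneg_right h3 (Real.exp_pos (-b * s)).le
    rwa [mul_assoc, ← Real.exp_add, show b * s + -b * s = 0 from by ring,
      Real.exp_zero, mul_one] at h4
  -- coordinate decay
  have hcoord : ∀ s ∈ Ici (0:ℝ), ∀ i,
      |ψ s x i| ^ (m i) ≤ C * Real.exp (-k * s) := by
    intro s hs i
    have hs0 : (0:ℝ) ≤ s := hs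
    have h1 : |ψ s x i| ≤ ρ * Real.exp (-b * s) := by
      refine (habs _ i).trans ((hupn s hs).trans ?_)
      exact mul_le_mul_of_nonneg_right hx.le (Real.exp_pos _).le
    have h2 : |ψ s x i| ^ (m i) ≤ (ρ * Real.exp (-b * s)) ^ (m i) :=
      pow_le_pow_left₀ (abs_nonneg _) h1 _
    have h3 : (ρ * Real.exp (-b * s)) ^ (m i)
        ≤ (max 1 ρ) ^ (m i) * Real.exp (-b * s) ^ (m i) := by
      rw [mul_pow]
      exact mul_le_mul_of_nonneg_right
        (pow_le_pow_left₀ hρ.le (le_max_right 1 ρ) _) (by positivity)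
    have h4 : (max 1 ρ) ^ (m i) ≤ C :=
      pow_le_pow_right₀ (le_max_left 1 ρ) (hm i).2
    have hexple : Real.exp (-b * s) ≤ 1 := by
      rw [Real.exp_le_one_iff]
      have : (0:ℝ) ≤ b * s := mul_nonneg hb.le hs0
      linarith
    have h5 : Real.exp (-b * s) ^ (m i) ≤ Real.exp (-b * s) ^ m₀ :=
      pow_le_pow_of_le_one (Real.exp_pos _).le hexple (hm i).1
    have h6 : Real.exp (-b * s) ^ m₀ = Real.exp (-k * s) := by
      rw [← Real.exp_nat_mul, hkdef]
      ring_nf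
    calc |ψ s x i| ^ (m i) ≤ (max 1 ρ) ^ (m i) * Real.exp (-b * s) ^ (m i) :=
          h2.trans h3
      _ ≤ C * Real.exp (-k * s) := by
          rw [← h6]
          exact mul_le_mul h4 h5 (by positivity) hCpos.le
  -- lower differential inequality
  have hSge : ∀ s ∈ Ici (0:ℝ), -a * R s - (a' + c₀) * (C * Real.exp (-k * s)) * R s
      ≤ ∑ i, ψ s x i * Y₃ (ψ s x) i := by
    intro s hs
    have hsum := Finset.sum_le_sum fun i (_ : i ∈ Finset.univ) => hB (ψ s x) i
    have h2 : ∑ i, (ψ s x i) ^ 2 * |ψ s x i| ^ (m i)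
        ≤ (C * Real.exp (-k * s)) * ∑ i, (ψ s x i) ^ 2 := by
      rw [Finset.mul_sum]
      refine Finset.sum_le_sum fun i _ => ?_
      calc (ψ s x i) ^ 2 * |ψ s x i| ^ (m i)
          ≤ (ψ s x i) ^ 2 * (C * Real.exp (-k * s)) :=
            mul_le_mul_of_nonneg_left (hcoord s hs i) (sq_nonneg _)
        _ = (C * Real.exp (-k * s)) * (ψ s x i) ^ 2 := mul_comm _ _
    have hsum2 : ∑ i, (-a * (ψ s x i) ^ 2 - (a' + c₀) * ((ψ s x i) ^ 2 * |ψ s x i| ^ (m i)))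
        = -a * (∑ i, (ψ s x i) ^ 2)
          - (a' + c₀) * ∑ i, (ψ s x i) ^ 2 * |ψ s x i| ^ (m i) := by
      rw [Finset.sum_sub_distrib, ← Finset.mul_sum, ← Finset.mul_sum]
    rw [hsum2] at hsum
    have h3 : (a' + c₀) * (∑ i, (ψ s x i) ^ 2 * |ψ s x i| ^ (m i))
        ≤ (a' + c₀) * ((C * Real.exp (-k * s)) * ∑ i, (ψ s x i) ^ 2) :=
      mul_le_mul_of_nonneg_left h2 hApos.le
    have h4 : (a' + c₀) * (C * Real.exp (-k * s)) * (∑ i, (ψ s x i) ^ 2)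
        = (a' + c₀) * ((C * Real.exp (-k * s)) * ∑ i, (ψ s x i) ^ 2) := mul_assoc _ _ _
    rw [hRsum s, h4]
    linarith [hsum, h3]
  -- lower Gronwall: R s * exp (θ s) is nondecreasing
  set θ : ℝ → ℝ := fun s => 2 * a * s + D * (1 - Real.exp (-k * s)) with hθdef
  have hθd : ∀ s : ℝ, HasDerivAt θ (2 * a + D * (Real.exp (-k * s) * k)) s := by
    intro s
    have h1 : HasDerivAt (fun u : ℝ => 2 * a * u) (2 * a) s := by
      simpa using (hasDerivAt_id s).const_mul (2 * a)
    have h2 : HasDerivAt (fun u : ℝ => D * (1 - Real.exp (-k * u)))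
        (D * (0 - Real.exp (-k * s) * (-k))) s :=
      (((hasDerivAt_const s (1:ℝ)).sub (hexp (-k) s))).const_mul D
    have := h1.add h2
    refine this.congr_deriv ?_
    ring
  have hlow : ∀ s ∈ Ici (0:ℝ), ‖x‖ ^ 2 ≤ R s * Real.exp (θ s) := by
    have hmono := aux_mono_stmt13 (fun s => R s * Real.exp (θ s))
      (fun s => (2 * ∑ i, ψ s x i * Y₃ (ψ s x) i) * Real.exp (θ s)
        + R s * (Real.exp (θ s) * (2 * a + D * (Real.exp (-k * s) * k))))
      (by
        intro s hs
        exact (hRd s hs).mul (hθd s).exp)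
      (by
        intro s hs
        have h1 := hSge s hs
        have h2 := Real.exp_pos (θ s)
        have h3 := Real.exp_pos (-k * s)
        have h4 := hRpos s
        have h5 : D * (Real.exp (-k * s) * k) = 2 * (a' + c₀) * C * Real.exp (-k * s) := by
          rw [show D * (Real.exp (-k * s) * k) = (D * k) * Real.exp (-k * s) from by ring, hDk]
        dsimp only
        rw [h5]
        have h6 := mul_le_mul_of_nonneg_right h1 h2.le
        nlinarith [h6])
    intro s hs
    have := hmono (self_mem_Ici) hs hs
    have hθ0 : θ 0 = 0 := by rw [hθdef]; norm_num
    calc ‖x‖ ^ 2 = R 0 * Real.exp (θ 0) := by rw [hR0, hθ0]; norm_num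
      _ ≤ R s * Real.exp (θ s) := this
  -- conclude at time t
  have htI : t ∈ Ici (0:ℝ) := ht
  constructor
  · -- lower bound
    have h1 := hlow t htI
    have hθle : θ t ≤ 2 * a * t + D := by
      show 2 * a * t + D * (1 - Real.exp (-k * t)) ≤ 2 * a * t + D
      have hde : 0 ≤ D * Real.exp (-k * t) := mul_nonneg hDpos.le (Real.exp_pos _).le
      nlinarith [hde]
    have h2 : Real.exp (θ t) ≤ Real.exp (2 * a * t + D) := Real.exp_le_exp.mpr hθle
    have h3 : R t * Real.exp (θ t) ≤ R t * Real.exp (2 * a * t + D) :=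
      mul_le_mul_of_nonneg_left h2 (hRpos t)
    have h4 : ‖x‖ ^ 2 * Real.exp (-(2 * a * t + D)) ≤ R t := by
      have h5 := mul_le_mul_of_nonneg_right (h1.trans h3)
        (Real.exp_pos (-(2 * a * t + D))).le
      rwa [mul_assoc (R t), ← Real.exp_add,
        show 2 * a * t + D + -(2 * a * t + D) = 0 from by ring,
        Real.exp_zero, mul_one] at h5
    have hsq : (Real.exp (-(D / 2)) * ‖x‖ * Real.exp (-a * t)) ^ 2 ≤ ‖ψ t x‖ ^ 2 := by
      rw [← hRnorm t]
      calc (Real.exp (-(D / 2)) * ‖x‖ * Real.exp (-a * t)) ^ 2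
          = ‖x‖ ^ 2 * Real.exp (-(2 * a * t + D)) := by
            rw [mul_pow, mul_pow, sq (Real.exp (-(D / 2))), ← Real.exp_add,
              sq (Real.exp (-a * t)), ← Real.exp_add]
            rw [show -(D / 2) + -(D / 2) = -D from by ring,
              show -a * t + -a * t = -(2 * a * t) from by ring]
            rw [show (-(2 * a * t + D)) = -D + -(2 * a * t) from by ring, Real.exp_add]
            ring
        _ ≤ R t := h4
    exact (pow_le_pow_iff_left₀ (by positivity) (norm_nonneg _) two_ne_zero).mp hsq
  · -- upper bound
    rw [one_mul]
    exact hupn t htI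
end

section
/- Let 0 < b ≤ a and α : Fin n → ℝ with −a ≤ αᵢ ≤ −b for all i; let 0 < b′ ≤ a′ and β : Fin n → ℝ with −a′ ≤ βᵢ ≤ −b′; let the mᵢ be even positive integers with 0 < m₀ ≤ mᵢ ≤ m₀′. Let Z₃ : ℝⁿ → ℝⁿ be differentiable with components Z₃ᵢ satisfying, for l = 0, 1 and constants c_l′, c_l″ > 0: ‖D^l Z₃ᵢ(x)‖ ≤ c_l′|xᵢ|^{2−l+mᵢ} for ‖x‖ ≤ 1 and ‖D^l Z₃ᵢ(x)‖ ≤ c_l″|xᵢ|^{1−l+mᵢ} for ‖x‖ ≥ 1; set c_l = max(c_l′, c_l″) and assume b₀ = b′ − c₀ > 0 and b₁ = b′(1+m₀) − c₁ > 0. Let ψ be a forward flow of Y₃(x)ᵢ = αᵢ xᵢ + βᵢ xᵢ^{1+mᵢ} + Z₃ᵢ(x), and let η be a first variation of ψ at x ∈ ℝⁿ with initial vector ν ∈ ℝⁿ. Then for every ρ > 0 there exists M₁ > 0 such that for all x with ‖x‖ < ρ, all ν ∈ ℝⁿ and all t ≥ 0: ‖η t‖ ≤ M₁‖ν‖e^{−b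 t}. -/
open scoped RealInnerProductSpace

-- aux: antitone from nonpos derivative on [0,∞)
lemma aux_le_of_deriv_nonpos (f : ℝ → ℝ)
    (h : ∀ t ≥ (0:ℝ), ∃ d, HasDerivAt f d t ∧ d ≤ 0) :
    ∀ t ≥ (0:ℝ), f t ≤ f 0 := by
  intro t ht
  have h1 : AntitoneOn f (Set.Ici 0) := by
    apply antitoneOn_of_deriv_nonpos (convex_Ici 0)
    · intro s hs
      obtain ⟨d, hd, _⟩ := h s hs
      exact hd.continuousAt.continuousWithinAt
    · intro s hs
      rw [interior_Ici] at hs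
      obtain ⟨d, hd, _⟩ := h s (le_of_lt hs)
      exact hd.differentiableAt.differentiableWithinAt
    · intro s hs
      rw [interior_Ici] at hs
      obtain ⟨d, hd, hd0⟩ := h s (le_of_lt hs)
      rw [hd.deriv]; exact hd0
  exact h1 Set.self_mem_Ici ht ht

-- aux: coordinate bound
lemma aux_coord {n : ℕ} (y : EuclideanSpace ℝ (Fin n)) (i : Fin n) : |y i| ≤ ‖y‖ := by
  have h1 : |y i| ^ 2 ≤ ‖y‖ ^ 2 := by
    rw [← real_inner_self_eq_norm_sq]
    simp only [PiLp.inner_apply, RCLike.inner_apply, conj_trivial]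
    have : |y i| ^ 2 = y i * y i := by rw [sq_abs]; ring
    rw [this]
    exact Finset.single_le_sum (f := fun j => y j * y j)
      (fun j _ => mul_self_nonneg _) (Finset.mem_univ i)
  exact (pow_le_pow_iff_left₀ (abs_nonneg _) (norm_nonneg _) two_ne_zero).mp h1

set_option maxHeartbeats 1000000 in
/-- Exponential decay of the first variation of the forward flow
of the perturbed binomial vector field `Y₃(x)ᵢ = αᵢ xᵢ + βᵢ xᵢ^{1+mᵢ} + Z₃ᵢ(x)`. -/
theorem stmt_14 (n : ℕ) (hn : 1 ≤ n) (a b : ℝ) (hb : 0 < b) (hab : b ≤ a)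
    (α : Fin n → ℝ) (hα : ∀ i, -a ≤ α i ∧ α i ≤ -b)
    (a' b' : ℝ) (hb' : 0 < b') (hab' : b' ≤ a')
    (β : Fin n → ℝ) (hβ : ∀ i, -a' ≤ β i ∧ β i ≤ -b')
    (m : Fin n → ℕ) (hme : ∀ i, Even (m i)) (hmp : ∀ i, 0 < m i)
    (m₀ m₀' : ℕ) (hm₀ : 0 < m₀) (hm : ∀ i, m₀ ≤ m i ∧ m i ≤ m₀')
    (c₀' c₀'' c₁' c₁'' : ℝ) (hc₀' : 0 < c₀') (hc₀'' : 0 < c₀'')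
    (hc₁' : 0 < c₁') (hc₁'' : 0 < c₁'')
    (Z₃ : EuclideanSpace ℝ (Fin n) → EuclideanSpace ℝ (Fin n))
    (hZdiff : Differentiable ℝ Z₃)
    (hZ0in : ∀ x : EuclideanSpace ℝ (Fin n), ‖x‖ ≤ 1 →
      ∀ i, |Z₃ x i| ≤ c₀' * |x i| ^ (2 + m i))
    (hZ0out : ∀ x : EuclideanSpace ℝ (Fin n), 1 ≤ ‖x‖ →
      ∀ i, |Z₃ x i| ≤ c₀'' * |x i| ^ (1 + m i))
    (hZ1in : ∀ x : EuclideanSpace ℝ (Fin n), ‖x‖ ≤ 1 →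
      ∀ i, ‖fderiv ℝ (fun y => Z₃ y i) x‖ ≤ c₁' * |x i| ^ (1 + m i))
    (hZ1out : ∀ x : EuclideanSpace ℝ (Fin n), 1 ≤ ‖x‖ →
      ∀ i, ‖fderiv ℝ (fun y => Z₃ y i) x‖ ≤ c₁'' * |x i| ^ (m i))
    (c₀ c₁ b₀ b₁ : ℝ) (hc₀ : c₀ = max c₀' c₀'') (hc₁ : c₁ = max c₁' c₁'')
    (hb₀ : b₀ = b' - c₀) (hb₁ : b₁ = b' * (1 + m₀) - c₁)
    (hb₀pos : 0 < b₀) (hb₁pos : 0 < b₁)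
    (Y₃ : EuclideanSpace ℝ (Fin n) → EuclideanSpace ℝ (Fin n))
    (hY₃ : ∀ x i, Y₃ x i = α i * x i + β i * x i ^ (1 + m i) + Z₃ x i)
    (ψ : ℝ → EuclideanSpace ℝ (Fin n) → EuclideanSpace ℝ (Fin n))
    (hψ0 : ∀ x, ψ 0 x = x)
    (hψ : ∀ t ≥ (0:ℝ), ∀ x, HasDerivAt (fun s => ψ s x) (Y₃ (ψ t x)) t)
    (η : EuclideanSpace ℝ (Fin n) → EuclideanSpace ℝ (Fin n) → ℝ → EuclideanSpace ℝ (Fin n))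
    (hη0 : ∀ x ν, η x ν 0 = ν)
    (hη : ∀ x ν, ∀ t ≥ (0:ℝ), HasDerivAt (η x ν) (fderiv ℝ Y₃ (ψ t x) (η x ν t)) t) :
    ∀ ρ > (0:ℝ), ∃ M₁ > (0:ℝ),
      ∀ x : EuclideanSpace ℝ (Fin n), ‖x‖ < ρ → ∀ ν : EuclideanSpace ℝ (Fin n),
        ∀ t ≥ (0:ℝ), ‖η x ν t‖ ≤ M₁ * ‖ν‖ * Real.exp (-b * t) := by
  have hc₀c : c₀' ≤ c₀ := hc₀ ▸ le_max_left _ _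
  have hc₀c' : c₀'' ≤ c₀ := hc₀ ▸ le_max_right _ _
  have hc₁c : c₁' ≤ c₁ := hc₁ ▸ le_max_left _ _
  have hc₁c' : c₁'' ≤ c₁ := hc₁ ▸ le_max_right _ _
  have hc₁pos : 0 < c₁ := lt_of_lt_of_le hc₁' hc₁c
  -- inner product formula
  have inner_eq : ∀ (y w : EuclideanSpace ℝ (Fin n)),
      ⟪y, w⟫ = ∑ i, y i * w i := by
    intro y w
    simp [PiLp.inner_apply, RCLike.inner_apply, conj_trivial]
    exact Finset.sum_congr rfl fun i _ => mul_comm _ _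
  -- uniform bound on Z₃ components
  have hZ0 : ∀ (y : EuclideanSpace ℝ (Fin n)) i, |Z₃ y i| ≤ c₀ * |y i| ^ (1 + m i) := by
    intro y i
    rcases le_total ‖y‖ 1 with h | h
    · refine (hZ0in y h i).trans ?_
      have h1 : |y i| ≤ 1 := (aux_coord y i).trans h
      have h2 : |y i| ^ (2 + m i) ≤ |y i| ^ (1 + m i) :=
        pow_le_pow_of_le_one (abs_nonneg _) h1 (by omega)
      calc c₀' * |y i| ^ (2 + m i) ≤ c₀' * |y i| ^ (1 + m i) := by
            exact mul_le_mul_of_nonneg_left h2 hc₀'.le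
        _ ≤ c₀ * |y i| ^ (1 + m i) :=
            mul_le_mul_of_nonneg_right hc₀c (by positivity)
    · exact (hZ0out y h i).trans (mul_le_mul_of_nonneg_right hc₀c' (by positivity))
  -- differentiability of components and of Y₃
  have hZidiff : ∀ (i : Fin n), Differentiable ℝ (fun z : EuclideanSpace ℝ (Fin n) => Z₃ z i) :=
    fun i => (EuclideanSpace.proj (𝕜 := ℝ) i).differentiable.comp hZdiff
  have hproj : ∀ (i : Fin n), Differentiable ℝ (fun z : EuclideanSpace ℝ (Fin n) => z i) :=
    fun i => (EuclideanSpace.proj (𝕜 := ℝ) i).differentiable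
  have hYcomp : ∀ i, (fun z : EuclideanSpace ℝ (Fin n) => Y₃ z i)
      = fun z => α i * z i + β i * z i ^ (1 + m i) + Z₃ z i :=
    fun i => funext fun z => hY₃ z i
  have hYdiff : Differentiable ℝ Y₃ := by
    rw [differentiable_piLp]
    intro i
    rw [hYcomp i]
    exact (((hproj i).const_mul _).add (((hproj i).pow _).const_mul _)).add (hZidiff i)
  -- the component formula for the derivative of Y₃
  have hLcomp : ∀ (y v : EuclideanSpace ℝ (Fin n)) i,
      fderiv ℝ Y₃ y v i =
        (α i + β i * ((1 + m i : ℕ) * (y i) ^ (m i))) * v i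
          + fderiv ℝ (fun z => Z₃ z i) y v := by
    intro y v i
    have h1 : HasFDerivAt (fun z : EuclideanSpace ℝ (Fin n) => Y₃ z i)
        ((EuclideanSpace.proj (𝕜 := ℝ) i).comp (fderiv ℝ Y₃ y)) y :=
      (EuclideanSpace.proj (𝕜 := ℝ) i).hasFDerivAt.comp y (hYdiff y).hasFDerivAt
    have hp : HasFDerivAt (fun z : EuclideanSpace ℝ (Fin n) => z i)
        (EuclideanSpace.proj (𝕜 := ℝ) i) y := (EuclideanSpace.proj (𝕜 := ℝ) i).hasFDerivAt
    have hpow : HasFDerivAt (fun z : EuclideanSpace ℝ (Fin n) => z i ^ (1 + m i))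
        ((((1 + m i : ℕ) : ℝ) * y i ^ (1 + m i - 1)) • EuclideanSpace.proj (𝕜 := ℝ) i) y := by
      exact (hasDerivAt_pow (1 + m i) (y i)).comp_hasFDerivAt y hp
    have h2 : HasFDerivAt (fun z : EuclideanSpace ℝ (Fin n) => Y₃ z i)
        (((α i) • EuclideanSpace.proj (𝕜 := ℝ) i
          + (β i) • ((((1 + m i : ℕ) : ℝ) * y i ^ (1 + m i - 1)) • EuclideanSpace.proj (𝕜 := ℝ) i))
          + fderiv ℝ (fun z => Z₃ z i) y) y := by
      rw [hYcomp i]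
      exact ((hp.const_mul (α i)).add (hpow.const_mul (β i))).add
        ((hZidiff i) y).hasFDerivAt
    have h3 := h1.unique h2
    have h4 : fderiv ℝ Y₃ y v i
        = ((EuclideanSpace.proj (𝕜 := ℝ) i).comp (fderiv ℝ Y₃ y)) v := rfl
    rw [h4, h3]
    simp only [ContinuousLinearMap.add_apply, ContinuousLinearMap.smul_apply,
      PiLp.proj_apply, smul_eq_mul]
    have : 1 + m i - 1 = m i := by omega
    rw [this]
    ring
  -- pointwise bound for the flow direction
  have hYb : ∀ y : EuclideanSpace ℝ (Fin n), (⟪y, Y₃ y⟫ : ℝ) ≤ -b * ⟪y, y⟫ := by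
    intro y
    rw [inner_eq, inner_eq, Finset.mul_sum]
    apply Finset.sum_le_sum
    intro i _
    rw [hY₃]
    have e1 : y i * y i ^ (1 + m i) = |y i| ^ (2 + m i) := by
      rw [Even.pow_abs (Even.add even_two (hme i))]
      ring
    have e2 : y i * Z₃ y i ≤ c₀ * |y i| ^ (2 + m i) := by
      calc y i * Z₃ y i ≤ |y i * Z₃ y i| := le_abs_self _
        _ = |y i| * |Z₃ y i| := abs_mul _ _
        _ ≤ |y i| * (c₀ * |y i| ^ (1 + m i)) :=
            mul_le_mul_of_nonneg_left (hZ0 y i) (abs_nonneg _)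
        _ = c₀ * |y i| ^ (2 + m i) := by ring
    have e3 : α i * (y i * y i) ≤ -b * (y i * y i) :=
      mul_le_mul_of_nonneg_right (hα i).2 (mul_self_nonneg _)
    have e4 : β i * |y i| ^ (2 + m i) ≤ -b' * |y i| ^ (2 + m i) :=
      mul_le_mul_of_nonneg_right (hβ i).2 (by positivity)
    have e5 : (0:ℝ) ≤ |y i| ^ (2 + m i) := by positivity
    have e1b : β i * (y i * y i ^ (1 + m i)) = β i * |y i| ^ (2 + m i) := by rw [e1]
    have e6 : c₀ * |y i| ^ (2 + m i) ≤ b' * |y i| ^ (2 + m i) :=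
      mul_le_mul_of_nonneg_right (by linarith) e5
    nlinarith [e1b, e2, e3, e4, e6]
  intro ρ hρ
  set K := max ρ (ρ ^ m₀') with hK
  have hKρ : ρ ≤ K := le_max_left _ _
  have hKρ' : ρ ^ m₀' ≤ K := le_max_right _ _
  have hKpos : 0 < K := lt_of_lt_of_le hρ hKρ
  set D := (n : ℝ) * (c₁ * K) with hD
  have hnpos : (0:ℝ) < n := by exact_mod_cast hn
  have hDpos : 0 < D := by positivity
  refine ⟨Real.exp (D / b), Real.exp_pos _, ?_⟩
  intro x hx ν t ht
  -- decay of the flow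
  have hψdec : ∀ s ≥ (0:ℝ), ‖ψ s x‖ ≤ ρ * Real.exp (-b * s) := by
    have key := aux_le_of_deriv_nonpos
      (fun s => (⟪ψ s x, ψ s x⟫ : ℝ) * Real.exp (2 * b * s)) ?_
    · intro s hs
      have h0 := key s hs
      simp only [hψ0, mul_zero, Real.exp_zero, mul_one] at h0
      simp only [real_inner_self_eq_norm_sq] at h0
      apply (pow_le_pow_iff_left₀ (norm_nonneg _) (by positivity) two_ne_zero).mp
      have hexp2 : Real.exp (-b * s) ^ 2 * Real.exp (2 * b * s) = 1 := by
        rw [pow_two, ← Real.exp_add, ← Real.exp_add, ← Real.exp_zero]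
        congr 1; ring
      have hE := Real.exp_pos (2 * b * s)
      have hψn : ‖ψ s x‖ ^ 2 = (⟪ψ s x, ψ s x⟫ : ℝ) := (real_inner_self_eq_norm_sq _).symm
      have hx2 : ‖x‖ ^ 2 ≤ ρ ^ 2 := by
        apply pow_le_pow_left₀ (norm_nonneg _) hx.le
      rw [mul_pow]
      nlinarith [h0, hexp2, hE, hx2]
    · intro s hs
      have hd1 : HasDerivAt (fun s => (⟪ψ s x, ψ s x⟫ : ℝ))
          ((⟪ψ s x, Y₃ (ψ s x)⟫ : ℝ) + (⟪Y₃ (ψ s x), ψ s x⟫ : ℝ)) s :=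
        (hψ s hs x).inner ℝ (hψ s hs x)
      have hd2 : HasDerivAt (fun s : ℝ => Real.exp (2 * b * s))
          (Real.exp (2 * b * s) * (2 * b * 1)) s :=
        ((hasDerivAt_id s).const_mul (2 * b)).exp
      refine ⟨_, hd1.mul hd2, ?_⟩
      have h1 := hYb (ψ s x)
      have h2 : (⟪Y₃ (ψ s x), ψ s x⟫ : ℝ) = (⟪ψ s x, Y₃ (ψ s x)⟫ : ℝ) := real_inner_comm _ _
      have h3 : (0:ℝ) ≤ (⟪ψ s x, ψ s x⟫ : ℝ) := real_inner_self_nonneg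
      have h4 := Real.exp_pos (2 * b * s)
      rw [h2]
      nlinarith [h1, h3, h4]
  -- bound on the derivative of Z₃ along the flow
  have hDZ : ∀ s ≥ (0:ℝ), ∀ i,
      ‖fderiv ℝ (fun z => Z₃ z i) (ψ s x)‖ ≤ c₁ * (K * Real.exp (-b * s)) := by
    intro s hs i
    set y : EuclideanSpace ℝ (Fin n) := ψ s x with hy
    have hyn : ‖y‖ ≤ ρ * Real.exp (-b * s) := hψdec s hs
    have hyi : |y i| ≤ ρ * Real.exp (-b * s) := (aux_coord y i).trans hyn
    have hexp1 : Real.exp (-b * s) ≤ 1 := by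
      rw [← Real.exp_zero]; apply Real.exp_le_exp.mpr; nlinarith
    have hexppos := Real.exp_pos (-b * s)
    rcases le_total ‖y‖ 1 with h | h
    · refine (hZ1in y h i).trans ?_
      have h1 : |y i| ≤ 1 := (aux_coord y i).trans h
      have h2 : |y i| ^ (1 + m i) ≤ |y i| ^ 1 :=
        pow_le_pow_of_le_one (abs_nonneg _) h1 (by omega)
      have h3 : c₁' * |y i| ^ (1 + m i) ≤ c₁ * |y i| := by
        rw [pow_one] at h2
        apply mul_le_mul hc₁c h2 (by positivity) hc₁pos.le
      refine h3.trans ?_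
      have : |y i| ≤ K * Real.exp (-b * s) := by
        refine hyi.trans ?_
        exact mul_le_mul_of_nonneg_right hKρ hexppos.le
      exact mul_le_mul_of_nonneg_left this hc₁pos.le
    · refine (hZ1out y h i).trans ?_
      have key : |y i| ^ (m i) ≤ K * Real.exp (-b * s) := by
        rcases le_total (|y i|) 1 with h1 | h1
        · have h2 : |y i| ^ (m i) ≤ |y i| ^ 1 :=
            pow_le_pow_of_le_one (abs_nonneg _) h1 (hmp i)
          rw [pow_one] at h2
          refine (h2.trans hyi).trans ?_
          exact mul_le_mul_of_nonneg_right hKρ hexppos.le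
        · have h2 : |y i| ^ (m i) ≤ (ρ * Real.exp (-b * s)) ^ (m i) :=
            pow_le_pow_left₀ (abs_nonneg _) hyi _
          have hbase : (1:ℝ) ≤ ρ * Real.exp (-b * s) := h1.trans hyi
          have h3 : (ρ * Real.exp (-b * s)) ^ (m i) ≤ (ρ * Real.exp (-b * s)) ^ m₀' :=
            pow_le_pow_right₀ hbase (hm i).2
          have h4 : (ρ * Real.exp (-b * s)) ^ m₀' ≤ ρ ^ m₀' * Real.exp (-b * s) := by
            rw [mul_pow]
            apply mul_le_mul_of_nonneg_left _ (by positivity)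
            calc Real.exp (-b * s) ^ m₀' ≤ Real.exp (-b * s) ^ 1 :=
                  pow_le_pow_of_le_one hexppos.le hexp1
                    (le_trans hm₀ (le_trans (hm i).1 (hm i).2))
              _ = Real.exp (-b * s) := pow_one _
          refine (h2.trans (h3.trans h4)).trans ?_
          exact mul_le_mul_of_nonneg_right hKρ' hexppos.le
      calc c₁'' * |y i| ^ (m i) ≤ c₁ * |y i| ^ (m i) :=
            mul_le_mul_of_nonneg_right hc₁c' (by positivity)
        _ ≤ c₁ * (K * Real.exp (-b * s)) := mul_le_mul_of_nonneg_left key hc₁pos.le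
  -- the key inner-product bound for the first variation
  have hηb : ∀ s ≥ (0:ℝ),
      (⟪η x ν s, fderiv ℝ Y₃ (ψ s x) (η x ν s)⟫ : ℝ)
        ≤ (-b + D * Real.exp (-b * s)) * (⟪η x ν s, η x ν s⟫ : ℝ) := by
    intro s hs
    set e := η x ν s with he
    set y : EuclideanSpace ℝ (Fin n) := ψ s x with hy
    have hnorm2 : (⟪e, e⟫ : ℝ) = ‖e‖ ^ 2 := real_inner_self_eq_norm_sq _
    rw [inner_eq, inner_eq]
    have step : ∀ i : Fin n, e i * (fderiv ℝ Y₃ y e) i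
        ≤ -b * (e i * e i) + c₁ * (K * Real.exp (-b * s)) * ‖e‖ ^ 2 := by
      intro i
      rw [hLcomp y e i]
      have t1 : α i * (e i * e i) ≤ -b * (e i * e i) :=
        mul_le_mul_of_nonneg_right (hα i).2 (mul_self_nonneg _)
      have t2 : β i * (((1 + m i : ℕ) : ℝ) * y i ^ (m i)) * (e i * e i) ≤ 0 := by
        apply mul_nonpos_of_nonpos_of_nonneg _ (mul_self_nonneg _)
        apply mul_nonpos_of_nonpos_of_nonneg
        · nlinarith [(hβ i).2, hb']
        · have hyn : (0:ℝ) ≤ y i ^ m i := by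
            rw [← Even.pow_abs (hme i)]; positivity
          positivity
      have t3 : e i * (fderiv ℝ (fun z => Z₃ z i) y e)
          ≤ c₁ * (K * Real.exp (-b * s)) * ‖e‖ ^ 2 := by
        calc e i * (fderiv ℝ (fun z => Z₃ z i) y e)
            ≤ |e i * (fderiv ℝ (fun z => Z₃ z i) y e)| := le_abs_self _
          _ = |e i| * ‖(fderiv ℝ (fun z => Z₃ z i) y e)‖ := by
              rw [abs_mul, Real.norm_eq_abs]
          _ ≤ ‖e‖ * (‖fderiv ℝ (fun z => Z₃ z i) y‖ * ‖e‖) := by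
              apply mul_le_mul (aux_coord e i)
                ((fderiv ℝ (fun z => Z₃ z i) y).le_opNorm e)
                (norm_nonneg _) (norm_nonneg _)
          _ ≤ ‖e‖ * (c₁ * (K * Real.exp (-b * s)) * ‖e‖) := by
              apply mul_le_mul_of_nonneg_left _ (norm_nonneg _)
              exact mul_le_mul_of_nonneg_right (hDZ s hs i) (norm_nonneg _)
          _ = c₁ * (K * Real.exp (-b * s)) * ‖e‖ ^ 2 := by ring
      nlinarith [t1, t2, t3]
    calc ∑ i, e i * (fderiv ℝ Y₃ y e) i
        ≤ ∑ i : Fin n, (-b * (e i * e i) + c₁ * (K * Real.exp (-b * s)) * ‖e‖ ^ 2) :=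
          Finset.sum_le_sum fun i _ => step i
      _ = -b * (∑ i, e i * e i) + (n : ℝ) * (c₁ * (K * Real.exp (-b * s)) * ‖e‖ ^ 2) := by
          rw [Finset.sum_add_distrib, ← Finset.mul_sum, Finset.sum_const, Finset.card_fin]
          push_cast; ring
      _ = (-b + D * Real.exp (-b * s)) * ∑ i, e i * e i := by
          have : (∑ i, e i * e i) = ‖e‖ ^ 2 := by rw [← hnorm2, inner_eq]
          rw [this, hD]; ring
  -- Gronwall-type comparison for the first variation
  have key2 := aux_le_of_deriv_nonpos
      (fun s => (⟪η x ν s, η x ν s⟫ : ℝ)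
        * Real.exp (2 * b * s + (2 * D / b) * Real.exp (-b * s))) ?_
  · have hfin := key2 t ht
    simp only [hη0, mul_zero, Real.exp_zero, mul_one, zero_add] at hfin
    simp only [real_inner_self_eq_norm_sq] at hfin
    apply (pow_le_pow_iff_left₀ (norm_nonneg _) (by positivity) two_ne_zero).mp
    have hE1 : (0:ℝ) < Real.exp (2 * b * t + (2 * D / b) * Real.exp (-b * t)) :=
      Real.exp_pos _
    have hone : (1:ℝ) ≤ Real.exp ((2 * D / b) * Real.exp (-b * t)) :=
      Real.one_le_exp (by positivity)
    have hRE : (Real.exp (D / b) * ‖ν‖ * Real.exp (-b * t)) ^ 2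
        * Real.exp (2 * b * t + (2 * D / b) * Real.exp (-b * t))
        = ‖ν‖ ^ 2 * Real.exp (2 * D / b) * Real.exp ((2 * D / b) * Real.exp (-b * t)) := by
      have hsplit : Real.exp (D / b) * Real.exp (D / b)
          * (Real.exp (-b * t) * Real.exp (-b * t))
          * Real.exp (2 * b * t + 2 * D / b * Real.exp (-b * t))
          = Real.exp (2 * D / b) * Real.exp (2 * D / b * Real.exp (-b * t)) := by
        simp only [← Real.exp_add]
        congr 1
        ring
      linear_combination (‖ν‖ * ‖ν‖) * hsplit
    nlinarith [hfin, hRE, hE1, hone, sq_nonneg ‖ν‖, Real.exp_pos (2 * D / b),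
      mul_le_mul_of_nonneg_left hone
        (mul_nonneg (sq_nonneg ‖ν‖) (Real.exp_pos (2 * D / b)).le)]
  · intro s hs
    have hd1 : HasDerivAt (fun s => (⟪η x ν s, η x ν s⟫ : ℝ))
        ((⟪η x ν s, fderiv ℝ Y₃ (ψ s x) (η x ν s)⟫ : ℝ)
          + (⟪fderiv ℝ Y₃ (ψ s x) (η x ν s), η x ν s⟫ : ℝ)) s :=
      (hη x ν s hs).inner ℝ (hη x ν s hs)
    have hg : HasDerivAt (fun s : ℝ => 2 * b * s + (2 * D / b) * Real.exp (-b * s))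
        (2 * b * 1 + (2 * D / b) * (Real.exp (-b * s) * (-b * 1))) s :=
      (((hasDerivAt_id s).const_mul (2 * b))).add
        ((((hasDerivAt_id s).const_mul (-b)).exp).const_mul (2 * D / b))
    have hd2 := hg.exp
    refine ⟨_, hd1.mul hd2, ?_⟩
    have hw := hηb s hs
    have hcm : (⟪fderiv ℝ Y₃ (ψ s x) (η x ν s), η x ν s⟫ : ℝ)
        = (⟪η x ν s, fderiv ℝ Y₃ (ψ s x) (η x ν s)⟫ : ℝ) := real_inner_comm _ _
    have hu0 : (0:ℝ) ≤ (⟪η x ν s, η x ν s⟫ : ℝ) := real_inner_self_nonneg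
    have hEp := Real.exp_pos (2 * b * s + (2 * D / b) * Real.exp (-b * s))
    have hg'eq : 2 * b * 1 + (2 * D / b) * (Real.exp (-b * s) * (-b * 1))
        = 2 * b - 2 * (D * Real.exp (-b * s)) := by
      field_simp
      ring
    rw [hcm, hg'eq]
    nlinarith [hw, hu0, hEp, mul_le_mul_of_nonneg_right hw hEp.le]
end

section
/- Let 0 < b ≤ a and α : Fin n → ℝ with −a ≤ αᵢ ≤ −b for all i. Let Z₁ : ℝⁿ → ℝⁿ be differentiable satisfying, for some integer m ≥ 1 and constants c₁′, c₁″ > 0: ‖DZ₁(x)‖ ≤ c₁′‖x‖^{m} for ‖x‖ ≤ 1, and ‖DZ₁(x)‖ ≤ c₁″ for ‖x‖ ≥ 1 (operator norms). Set c₁ = max(c₁′, c₁″) and assume b₁ = b − c₁ > 0. Let ψ be a forward flow of Y₁(x)ᵢ = αᵢ xᵢ + Z₁(x)ᵢ, and let η be a first variation of ψ at x ∈ ℝⁿ with initial vector ν ∈ ℝⁿ. Then ‖η t‖ ≤ ‖ν‖e^{−b₁ t} for all t ≥ 0; in particular ‖η t‖ → 0 as t → ∞, uniformly in x ∈ ℝⁿ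 and in ν in bounded sets. -/
open scoped RealInnerProductSpace

noncomputable def diagCLM (n : ℕ) (α : Fin n → ℝ) :
    EuclideanSpace ℝ (Fin n) →L[ℝ] EuclideanSpace ℝ (Fin n) :=
  LinearMap.toContinuousLinearMap
    { toFun := fun x => WithLp.toLp 2 (fun i => α i * x i)
      map_add' := by
        intro x y; ext i
        simp [mul_add]
      map_smul' := by
        intro c x; ext i
        simp [PiLp.smul_apply, smul_eq_mul]; ring }

lemma diagCLM_apply (n : ℕ) (α : Fin n → ℝ) (x : EuclideanSpace ℝ (Fin n)) (i : Fin n) :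
    diagCLM n α x i = α i * x i := rfl

/-- Exponential decay of the first variation of the forward flow
of `Y₁(x)ᵢ = αᵢ xᵢ + Z₁(x)ᵢ`, uniformly in `x ∈ ℝⁿ` and in `ν` in bounded sets. -/
theorem stmt_16 (n : ℕ) (hn : 1 ≤ n) (a b : ℝ) (hb : 0 < b) (hab : b ≤ a)
    (α : Fin n → ℝ) (hα : ∀ i, -a ≤ α i ∧ α i ≤ -b)
    (m : ℕ) (hm : 1 ≤ m) (c₁' c₁'' : ℝ) (hc₁' : 0 < c₁') (hc₁'' : 0 < c₁'')
    (Z₁ : EuclideanSpace ℝ (Fin n) → EuclideanSpace ℝ (Fin n))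
    (hZdiff : Differentiable ℝ Z₁)
    (hZ1in : ∀ x : EuclideanSpace ℝ (Fin n), ‖x‖ ≤ 1 → ‖fderiv ℝ Z₁ x‖ ≤ c₁' * ‖x‖ ^ m)
    (hZ1out : ∀ x : EuclideanSpace ℝ (Fin n), 1 ≤ ‖x‖ → ‖fderiv ℝ Z₁ x‖ ≤ c₁'')
    (c₁ b₁ : ℝ) (hc₁ : c₁ = max c₁' c₁'') (hb₁ : b₁ = b - c₁) (hb₁pos : 0 < b₁)
    (Y₁ : EuclideanSpace ℝ (Fin n) → EuclideanSpace ℝ (Fin n))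
    (hY₁ : ∀ x i, Y₁ x i = α i * x i + Z₁ x i)
    (ψ : ℝ → EuclideanSpace ℝ (Fin n) → EuclideanSpace ℝ (Fin n))
    (hψ0 : ∀ x, ψ 0 x = x)
    (hψ : ∀ t ≥ (0:ℝ), ∀ x, HasDerivAt (fun s => ψ s x) (Y₁ (ψ t x)) t)
    (η : EuclideanSpace ℝ (Fin n) → EuclideanSpace ℝ (Fin n) → ℝ → EuclideanSpace ℝ (Fin n))
    (hη0 : ∀ x ν, η x ν 0 = ν)
    (hη : ∀ x ν, ∀ t ≥ (0:ℝ), HasDerivAt (η x ν) (fderiv ℝ Y₁ (ψ t x) (η x ν t)) t) :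
    (∀ x ν : EuclideanSpace ℝ (Fin n), ∀ t ≥ (0:ℝ),
      ‖η x ν t‖ ≤ ‖ν‖ * Real.exp (-b₁ * t)) ∧
    (∀ C > (0:ℝ), ∀ ε > (0:ℝ), ∃ T : ℝ, ∀ t ≥ T,
      ∀ x ν : EuclideanSpace ℝ (Fin n), ‖ν‖ ≤ C → ‖η x ν t‖ ≤ ε) := by
  set L := diagCLM n α with hL
  have hYeq : Y₁ = fun x => L x + Z₁ x := by
    funext x; ext i
    simp [hY₁ x i, PiLp.add_apply, hL, diagCLM_apply]
  have hfderivY : ∀ y, fderiv ℝ Y₁ y = (L : _ →L[ℝ] _) + fderiv ℝ Z₁ y := by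
    intro y
    rw [hYeq]
    exact (L.hasFDerivAt.add (hZdiff y).hasFDerivAt).fderiv
  -- bound on ‖fderiv Z₁‖
  have hZbound : ∀ y, ‖fderiv ℝ Z₁ y‖ ≤ c₁ := by
    intro y
    rcases le_or_gt ‖y‖ 1 with h | h
    · calc ‖fderiv ℝ Z₁ y‖ ≤ c₁' * ‖y‖ ^ m := hZ1in y h
        _ ≤ c₁' * 1 := by
          gcongr
          exact pow_le_one₀ (norm_nonneg _) h
        _ ≤ c₁ := by rw [hc₁, mul_one]; exact le_max_left _ _
    · exact (hZ1out y h.le).trans (hc₁ ▸ le_max_right _ _)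
  have key : ∀ y v : EuclideanSpace ℝ (Fin n),
      ⟪fderiv ℝ Y₁ y v, v⟫ ≤ -b₁ * ‖v‖ ^ 2 := by
    intro y v
    rw [hfderivY y]
    have h1 : ⟪L v, v⟫ = ∑ i, α i * (v i * v i) := by
      simp [PiLp.inner_apply, hL, diagCLM_apply, mul_assoc]
      exact Finset.sum_congr rfl fun i _ => by ring
    have h2 : ‖v‖ ^ 2 = ∑ i, v i * v i := by
      rw [← real_inner_self_eq_norm_sq]; simp only [PiLp.inner_apply, RCLike.inner_apply, conj_trivial]
    have hLb : ⟪L v, v⟫ ≤ -b * ‖v‖ ^ 2 := by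
      rw [h1, h2, Finset.mul_sum]
      exact Finset.sum_le_sum fun i _ =>
        mul_le_mul_of_nonneg_right (hα i).2 (mul_self_nonneg _)
    have hDb : ⟪fderiv ℝ Z₁ y v, v⟫ ≤ c₁ * ‖v‖ ^ 2 := by
      calc ⟪fderiv ℝ Z₁ y v, v⟫ ≤ ‖fderiv ℝ Z₁ y v‖ * ‖v‖ := real_inner_le_norm _ _
        _ ≤ (‖fderiv ℝ Z₁ y‖ * ‖v‖) * ‖v‖ := by
          gcongr; exact (fderiv ℝ Z₁ y).le_opNorm v
        _ ≤ (c₁ * ‖v‖) * ‖v‖ := by gcongr; exact hZbound y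
        _ = c₁ * ‖v‖ ^ 2 := by ring
    have : ⟪(L + fderiv ℝ Z₁ y) v, v⟫ = ⟪L v, v⟫ + ⟪fderiv ℝ Z₁ y v, v⟫ := by
      simp [inner_add_left]
    rw [this]
    nlinarith [hLb, hDb]
  -- main decay estimate
  have main : ∀ x ν : EuclideanSpace ℝ (Fin n), ∀ t ≥ (0:ℝ),
      ‖η x ν t‖ ≤ ‖ν‖ * Real.exp (-b₁ * t) := by
    intro x ν t ht
    set u := η x ν with hu
    set F : ℝ → ℝ := fun s => ⟪u s, u s⟫ * Real.exp (2 * b₁ * s) with hF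
    have hexp : ∀ s : ℝ, HasDerivAt (fun r => Real.exp (2 * b₁ * r))
        (2 * b₁ * Real.exp (2 * b₁ * s)) s := by
      intro s
      simpa [mul_comm] using (((hasDerivAt_id s).const_mul (2 * b₁)).exp)
    have hFderiv : ∀ s ≥ (0:ℝ), HasDerivAt F
        ((⟪u s, fderiv ℝ Y₁ (ψ s x) (u s)⟫ + ⟪fderiv ℝ Y₁ (ψ s x) (u s), u s⟫)
          * Real.exp (2 * b₁ * s)
          + ⟪u s, u s⟫ * (2 * b₁ * Real.exp (2 * b₁ * s))) s := by
      intro s hs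
      exact ((hη x ν s hs).inner ℝ (hη x ν s hs)).mul (hexp s)
    have hFderiv_nonpos : ∀ s ≥ (0:ℝ),
        (⟪u s, fderiv ℝ Y₁ (ψ s x) (u s)⟫ + ⟪fderiv ℝ Y₁ (ψ s x) (u s), u s⟫)
          * Real.exp (2 * b₁ * s)
          + ⟪u s, u s⟫ * (2 * b₁ * Real.exp (2 * b₁ * s)) ≤ 0 := by
      intro s hs
      have hk := key (ψ s x) (u s)
      have hcomm : ⟪u s, fderiv ℝ Y₁ (ψ s x) (u s)⟫
          = ⟪fderiv ℝ Y₁ (ψ s x) (u s), u s⟫ := real_inner_comm _ _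
      have hnorm : ⟪u s, u s⟫ = ‖u s‖ ^ 2 := real_inner_self_eq_norm_sq _
      have hepos : (0:ℝ) < Real.exp (2 * b₁ * s) := Real.exp_pos _
      rw [hcomm, hnorm]
      nlinarith [hk, hepos, sq_nonneg ‖u s‖]
    have hanti : AntitoneOn F (Set.Ici (0:ℝ)) := by
      apply antitoneOn_of_deriv_nonpos (convex_Ici 0)
      · intro s hs
        exact (hFderiv s hs).continuousAt.continuousWithinAt
      · intro s hs
        rw [interior_Ici] at hs
        exact (hFderiv s hs.le).differentiableAt.differentiableWithinAt
      · intro s hs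
        rw [interior_Ici] at hs
        rw [(hFderiv s hs.le).deriv]
        exact hFderiv_nonpos s hs.le
    have hF0 : F 0 = ‖ν‖ ^ 2 := by
      show ⟪u 0, u 0⟫ * Real.exp (2 * b₁ * 0) = ‖ν‖ ^ 2
      rw [hu, hη0, real_inner_self_eq_norm_sq]
      simp
    have hFt : F t ≤ ‖ν‖ ^ 2 := hF0 ▸ hanti Set.self_mem_Ici ht ht
    have hepos : (0:ℝ) < Real.exp (2 * b₁ * t) := Real.exp_pos _
    have hsq : ‖u t‖ ^ 2 ≤ (‖ν‖ * Real.exp (-b₁ * t)) ^ 2 := by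
      have h1 : ‖u t‖ ^ 2 * Real.exp (2 * b₁ * t) ≤ ‖ν‖ ^ 2 := by
        rw [← real_inner_self_eq_norm_sq]; exact hFt
      have h2 : (‖ν‖ * Real.exp (-b₁ * t)) ^ 2 * Real.exp (2 * b₁ * t) = ‖ν‖ ^ 2 := by
        rw [mul_pow, ← Real.exp_nat_mul, mul_assoc, ← Real.exp_add]
        rw [show (2:ℕ) * (-b₁ * t) + 2 * b₁ * t = 0 by push_cast; ring, Real.exp_zero, mul_one]
      nlinarith [h1, h2, hepos]
    calc ‖u t‖ = Real.sqrt (‖u t‖ ^ 2) := (Real.sqrt_sq (norm_nonneg _)).symm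
      _ ≤ Real.sqrt ((‖ν‖ * Real.exp (-b₁ * t)) ^ 2) := Real.sqrt_le_sqrt hsq
      _ = ‖ν‖ * Real.exp (-b₁ * t) := Real.sqrt_sq
          (mul_nonneg (norm_nonneg _) (Real.exp_pos _).le)
  refine ⟨main, ?_⟩
  intro C hC ε hε
  refine ⟨max 0 (Real.log (C / ε) / b₁), fun t ht x ν hν => ?_⟩
  have ht0 : (0:ℝ) ≤ t := le_trans (le_max_left _ _) ht
  have ht1 : Real.log (C / ε) / b₁ ≤ t := le_trans (le_max_right _ _) ht
  have ht2 : Real.log (C / ε) ≤ b₁ * t := by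
    rw [div_le_iff₀ hb₁pos] at ht1
    linarith [ht1]
  calc ‖η x ν t‖ ≤ ‖ν‖ * Real.exp (-b₁ * t) := main x ν t ht0
    _ ≤ C * Real.exp (-b₁ * t) := by gcongr
    _ ≤ ε := by
      have hEq : C * Real.exp (-b₁ * t) = Real.exp (Real.log C + -b₁ * t) := by
        rw [Real.exp_add, Real.exp_log hC]
      rw [hEq, ← Real.exp_log hε]
      apply Real.exp_le_exp.2
      rw [Real.log_div hC.ne' hε.ne'] at ht2
      linarith
end
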